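/- arXiv:2402.00549 — 12 statements merged into one kernel-verified Lean document; each statement's English description precedes it below -/
import Mathlib

section
/- In a linearly ordered group (both left- and right-ordered), if f^n g^m = g^m f^n for some positive integers m, n, then fg = gf. -/
private lemma key_aux {G : Type*} [Group G] [LinearOrder G]
    [CovariantClass G G (· * ·) (· < ·)]
    [CovariantClass G G (Function.swap (· * ·)) (· < ·)]
    (f g : G) (m n : ℕ) (hm : 0 < m) (hn : 0 < n)
    (hfg : f * g < g * f) : f ^ n * g ^ m < g ^ m * f ^ n := by
  have h1 : f * g * f⁻¹ < g := by
    rw [mul_inv_lt_iff_lt_mul]; exact hfg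
  have h2 : f * g ^ m * f⁻¹ < g ^ m := by
    rw [← conj_pow]; exact pow_lt_pow_left' hm.ne' h1
  have h3 : f * g ^ m < g ^ m * f := by
    rwa [mul_inv_lt_iff_lt_mul] at h2
  clear h1 h2 hfg
  induction n with
  | zero => exact absurd hn (lt_irrefl 0)
  | succ k ih =>
    rcases Nat.eq_zero_or_pos k with hk | hk
    · subst hk; simpa using h3
    · calc f ^ (k + 1) * g ^ m = f * (f ^ k * g ^ m) := by
            rw [pow_succ']; group
        _ < f * (g ^ m * f ^ k) := by
            exact mul_lt_mul_right (ih hk) f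
        _ = (f * g ^ m) * f ^ k := by group
        _ < (g ^ m * f) * f ^ k := mul_lt_mul_left h3 _
        _ = g ^ m * f ^ (k + 1) := by rw [pow_succ]; group

theorem stmt_0 {G : Type*} [Group G] [LinearOrder G]
    [CovariantClass G G (· * ·) (· < ·)]
    [CovariantClass G G (Function.swap (· * ·)) (· < ·)]
    (f g : G) (m n : ℕ) (hm : 0 < m) (hn : 0 < n)
    (h : f ^ n * g ^ m = g ^ m * f ^ n) :
    f * g = g * f := by
  rcases lt_trichotomy (f * g) (g * f) with hlt | heq | hgt
  · exact absurd h (key_aux f g m n hm hn hlt).ne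
  · exact heq
  · exact absurd h.symm (key_aux g f n m hn hm hgt).ne
end

section
/- In a linearly ordered group, if f^m = g^n for nonzero integers m, n, then f is the unique element with that property and f commutes with g. -/
section aux

variable {G : Type*} [Group G] [LinearOrder G]
    [CovariantClass G G (· * ·) (· < ·)]
    [CovariantClass G G (Function.swap (· * ·)) (· < ·)]

lemma aux_pow_lt {a b : G} (h : a < b) : ∀ n : ℕ, a ^ (n + 1) < b ^ (n + 1) := by
  intro n
  induction n with
  | zero => simpa
  | succ k ih =>
    rw [pow_succ a (k+1), pow_succ b (k+1)]
    exact mul_lt_mul_of_lt_of_lt ih h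

lemma aux_zpow_lt {a b : G} (h : a < b) {n : ℤ} (hn : 0 < n) : a ^ n < b ^ n := by
  obtain ⟨k, rfl⟩ : ∃ k : ℕ, n = (k : ℤ) + 1 := by
    refine ⟨(n - 1).toNat, ?_⟩
    omega
  have := aux_pow_lt h k
  rw [← zpow_natCast, ← zpow_natCast] at this
  push_cast at this ⊢
  exact this

lemma aux_zpow_inj {n : ℤ} (hn : n ≠ 0) : Function.Injective (fun a : G => a ^ n) := by
  intro a b hab
  simp only at hab
  by_contra hne
  rcases lt_trichotomy a b with hlt | heq | hgt
  · rcases hn.lt_or_gt with h | h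
    · have := aux_zpow_lt hlt (n := -n) (by omega)
      rw [zpow_neg, zpow_neg, hab] at this
      exact lt_irrefl _ this
    · exact absurd hab (aux_zpow_lt hlt h).ne
  · exact hne heq
  · rcases hn.lt_or_gt with h | h
    · have := aux_zpow_lt hgt (n := -n) (by omega)
      rw [zpow_neg, zpow_neg, hab] at this
      exact lt_irrefl _ this
    · exact absurd hab.symm (aux_zpow_lt hgt h).ne

end aux

theorem stmt_1 {G : Type*} [Group G] [LinearOrder G]
    [CovariantClass G G (· * ·) (· < ·)]
    [CovariantClass G G (Function.swap (· * ·)) (· < ·)]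
    (f g : G) (m n : ℤ) (hm : m ≠ 0) (hn : n ≠ 0)
    (h : f ^ m = g ^ n) :
    (∀ f' : G, f' ^ m = g ^ n → f' = f) ∧ f * g = g * f := by
  constructor
  · intro f' hf'
    exact aux_zpow_inj hm (hf'.trans h.symm)
  · have hcomm : f * g ^ n = g ^ n * f := by
      rw [← h, ← zpow_add_one, ← zpow_one_add, add_comm]
    have : (f * g * f⁻¹) ^ n = g ^ n := by
      rw [conj_zpow, hcomm]
      simp [mul_assoc]
    have := aux_zpow_inj hn this
    rw [mul_inv_eq_iff_eq_mul] at this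
    exact this
end

section
/- If an ordered group G has Archimedean centralisers (the centraliser of every non-identity element is an Archimedean ordered group), then G satisfies GOG1: for all f, g > 1 with f ≥ g and all g₀ in the centraliser of g, there exists f₀ in the centraliser of f with f₀ ≥ g₀. -/
namespace GOG

variable {α : Type*}

/-- Centraliser of `g` with respect to an abstract multiplication. -/
def Cent (mul : α → α → α) (g : α) : Set α := {h | mul h g = mul g h}

/-- `f ≼ g`: `f` lies in the convex hull of the centraliser of `g` (or `f = 1`). -/
def Preceq (mul : α → α → α) (one : α) (le : α → α → Prop) (f g : α) : Prop :=
  f = one ∨ (g ≠ one ∧ ∃ a ∈ Cent mul g, ∃ b ∈ Cent mul g, le a f ∧ le f b)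

/-- Strict part `f ≺ g`. -/
def Prec (mul : α → α → α) (one : α) (le : α → α → Prop) (f g : α) : Prop :=
  Preceq mul one le f g ∧ ¬ Preceq mul one le g f

/-- `f ≍ g`. -/
def Asymp (mul : α → α → α) (one : α) (le : α → α → Prop) (f g : α) : Prop :=
  Preceq mul one le f g ∧ Preceq mul one le g f

/-- `g ∼ h` iff `g h⁻¹ ≺ g`. -/
def Sim (mul : α → α → α) (one : α) (inv : α → α) (le : α → α → Prop) (g h : α) : Prop :=
  Prec mul one le (mul g (inv h)) g

/-- Axiom GOG1. -/
def GOG1 (mul : α → α → α) (one : α) (lt le : α → α → Prop) : Prop :=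
  ∀ f g : α, lt one f → lt one g → le g f →
    ∀ g₀ ∈ Cent mul g, ∃ f₀ ∈ Cent mul f, le g₀ f₀

/-- Axiom GOG2: if `f > C(g)` then `f g > g f`. -/
def GOG2 (mul : α → α → α) (one : α) (lt : α → α → Prop) : Prop :=
  ∀ f g : α, lt one f → lt one g → (∀ h ∈ Cent mul g, lt h f) → lt (mul g f) (mul f g)

/-- `s` is a scaling element. -/
def Scaling (mul : α → α → α) (one : α) (inv : α → α) (lt le : α → α → Prop) (s : α) : Prop :=
  lt one s ∧ (∀ a ∈ Cent mul s, ∀ b ∈ Cent mul s, mul a b = mul b a) ∧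
    ∀ f : α, Asymp mul one le f s → ∃ g ∈ Cent mul s, g ≠ one ∧ Sim mul one inv le g f

/-- Axiom GOG3: every growth rank contains a scaling element. -/
def GOG3 (mul : α → α → α) (one : α) (inv : α → α) (lt le : α → α → Prop) : Prop :=
  ∀ g : α, g ≠ one → ∃ s : α, Scaling mul one inv lt le s ∧ Asymp mul one le s g

/-- Being a (bi-ordered) linearly ordered group, for abstract operations. -/
def IsOrderedGroup (mul : α → α → α) (one : α) (inv : α → α) (lt : α → α → Prop) : Prop :=
  (∀ a b c : α, mul (mul a b) c = mul a (mul b c)) ∧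
    (∀ a : α, mul one a = a) ∧ (∀ a : α, mul a one = a) ∧
    (∀ a : α, mul (inv a) a = one) ∧
    (∀ a : α, ¬ lt a a) ∧ (∀ a b c : α, lt a b → lt b c → lt a c) ∧
    (∀ a b : α, lt a b ∨ a = b ∨ lt b a) ∧
    (∀ f g h : α, lt g h → lt (mul f g) (mul f h) ∧ lt (mul g f) (mul h f))

/-- Growth order group: ordered group satisfying GOG1, GOG2 and GOG3. -/
def IsGrowthOrderGroup (mul : α → α → α) (one : α) (inv : α → α) (lt le : α → α → Prop) : Prop :=
  IsOrderedGroup mul one inv lt ∧ GOG1 mul one lt le ∧ GOG2 mul one lt ∧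
    GOG3 mul one inv lt le

end GOG

theorem stmt_2 {G : Type*} [Group G] [LinearOrder G]
    [CovariantClass G G (· * ·) (· < ·)]
    [CovariantClass G G (Function.swap (· * ·)) (· < ·)]
    (harch : ∀ g : G, g ≠ 1 → ∀ a ∈ GOG.Cent (· * ·) g, ∀ b ∈ GOG.Cent (· * ·) g,
      a ≠ 1 → b ≠ 1 → ∃ n : ℤ, b ≤ a ^ n) :
    GOG.GOG1 (· * ·) (1 : G) (· < ·) (· ≤ ·) := by
  haveI : CovariantClass G G (· * ·) (· ≤ ·) := covariantClass_le_of_lt _ _ _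
  haveI : CovariantClass G G (Function.swap (· * ·)) (· ≤ ·) := covariantClass_le_of_lt _ _ _
  intro f g hf hg hgf g₀ hg₀
  by_cases h1 : g₀ = 1
  · exact ⟨f, rfl, h1 ▸ hf.le⟩
  · obtain ⟨n, hn⟩ := harch g hg.ne' g rfl g₀ hg₀ hg.ne' h1
    rcases le_or_gt n 0 with hn0 | hn0
    · refine ⟨f, rfl, hn.trans ?_⟩
      have h2 : (1 : G) ≤ g ^ (-n) := one_le_zpow hg.le (by omega)
      calc g ^ n ≤ 1 := by rw [← neg_neg n, zpow_neg]; exact inv_le_one'.mpr h2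
        _ ≤ f := hf.le
    · refine ⟨f ^ n.toNat, ?_, ?_⟩
      · show f ^ n.toNat * f = f * f ^ n.toNat
        exact Commute.pow_left rfl n.toNat
      · calc g₀ ≤ g ^ n := hn
          _ = g ^ n.toNat := by rw [← zpow_natCast, Int.toNat_of_nonneg hn0.le]
          _ ≤ f ^ n.toNat := pow_le_pow_left' hgf n.toNat
end

section
/- Let G be an ordered group satisfying GOG1 with quasi-order ≼ and strict relation ≺ (f ≺ g iff f ≼ g and not g ≼ f). If g ≺ h then gh ≍ h and hg ≍ h. -/
theorem stmt_5 {G : Type*} [Group G] [LinearOrder G]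
    [CovariantClass G G (· * ·) (· < ·)]
    [CovariantClass G G (Function.swap (· * ·)) (· < ·)]
    (h1 : GOG.GOG1 (· * ·) (1 : G) (· < ·) (· ≤ ·))
    (g h : G) (hgh : GOG.Prec (· * ·) (1 : G) (· ≤ ·) g h) :
    GOG.Asymp (· * ·) (1 : G) (· ≤ ·) (g * h) h ∧
    GOG.Asymp (· * ·) (1 : G) (· ≤ ·) (h * g) h := by

  obtain ⟨hle, hnle⟩ := hgh
  have hne1 : h ≠ 1 := fun hh => hnle (Or.inl hh)
  have hhh : GOG.Preceq (· * ·) (1:G) (· ≤ ·) h h :=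
    Or.inr ⟨hne1, h, rfl, h, rfl, le_rfl, le_rfl⟩
  rcases eq_or_ne g 1 with hg1 | hgne
  · subst hg1
    simp only [one_mul, mul_one]
    exact ⟨⟨hhh, hhh⟩, hhh, hhh⟩
  · -- witnesses for g ≼ h
    have hle' := hle
    rcases hle' with hg1 | ⟨-, a, ha, b, hb, hag, hgb⟩
    · exact absurd hg1 hgne
    have ha' : a * h = h * a := ha
    have hb' : b * h = h * b := hb
    have hall2 : ∀ c, c * g = g * c → ∀ d, d * g = g * d → ¬(c ≤ h ∧ h ≤ d) :=
      fun c hc d hd hcd => hnle (Or.inr ⟨hgne, c, hc, d, hd, hcd.1, hcd.2⟩)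
    -- key: h ≼ c from bounds 1 and c²
    have key : ∀ c : G, c ≠ 1 → ((c*c ≤ h ∧ h ≤ 1) ∨ (1 ≤ h ∧ h ≤ c*c)) →
        GOG.Preceq (· * ·) (1:G) (· ≤ ·) h c := by
      rintro c hc (⟨k1, k2⟩ | ⟨k1, k2⟩)
      · exact Or.inr ⟨hc, c*c, mul_assoc c c c, 1, (one_mul c).trans (mul_one c).symm, k1, k2⟩
      · exact Or.inr ⟨hc, 1, (one_mul c).trans (mul_one c).symm, c*c, mul_assoc c c c, k1, k2⟩
    have mulR : ∀ {x y : G}, x ≤ y → ∀ z : G, x * z ≤ y * z := by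
      intro x y hxy z
      rcases hxy.lt_or_eq with hl | he
      · exact (mul_lt_mul_left hl z).le
      · rw [he]
    have mulL : ∀ {x y : G}, x ≤ y → ∀ z : G, z * x ≤ z * y := by
      intro x y hxy z
      rcases hxy.lt_or_eq with hl | he
      · exact (mul_lt_mul_right hl z).le
      · rw [he]
    have memR : ∀ x : G, x * h = h * x → (x*h)*h = h*(x*h) := fun x hx => by
      rw [hx, mul_assoc, hx]
    have memL : ∀ x : G, x * h = h * x → (h*x)*h = h*(h*x) := fun x hx => by
      rw [mul_assoc, hx]
    have p1 : GOG.Preceq (· * ·) (1:G) (· ≤ ·) (g*h) h :=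
      Or.inr ⟨hne1, a*h, memR a ha', b*h, memR b hb',
        mulR hag h, mulR hgb h⟩
    have p2 : GOG.Preceq (· * ·) (1:G) (· ≤ ·) (h*g) h :=
      Or.inr ⟨hne1, h*a, memL a ha', h*b, memL b hb',
        mulL hag h, mulL hgb h⟩
    rcases lt_trichotomy h 1 with hh | hh | hh
    · have hall : ∀ c : G, c * g = g * c → h < c := by
        intro c hc
        by_contra hcl
        push_neg at hcl
        exact hall2 c hc 1 (by group) ⟨hcl, hh.le⟩
      have h2 : h < g⁻¹ * g⁻¹ := hall _ (by group)
      have h1 : h < g⁻¹ := hall _ (by group)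
      -- g*h side
      have e1 : g * h < g⁻¹ := by
        have := mul_lt_mul_right h2 g
        rwa [show g * (g⁻¹ * g⁻¹) = g⁻¹ by group] at this
      have e2 : (g*h)*(g*h) < h := by
        have := mul_lt_mul_left e1 (g*h)
        rwa [show g⁻¹ * (g * h) = h by group] at this
      have gh1 : g * h < 1 := by
        have := mul_lt_mul_right h1 g
        rwa [show g * g⁻¹ = 1 by group] at this
      -- h*g side
      have f1 : h * g < g⁻¹ := by
        have := mul_lt_mul_left h2 g
        rwa [show g⁻¹ * g⁻¹ * g = g⁻¹ by group] at this
      have f2 : (h*g)*(h*g) < h := by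
        have := mul_lt_mul_right f1 (h*g)
        rwa [show (h*g) * g⁻¹ = h by group] at this
      have hg1 : h * g < 1 := by
        have := mul_lt_mul_left h1 g
        rwa [show g⁻¹ * g = 1 by group] at this
      exact ⟨⟨p1, key _ (ne_of_lt gh1) (Or.inl ⟨e2.le, hh.le⟩)⟩,
             ⟨p2, key _ (ne_of_lt hg1) (Or.inl ⟨f2.le, hh.le⟩)⟩⟩
    · exact absurd hh hne1
    · have hall : ∀ c : G, c * g = g * c → c < h := by
        intro c hc
        by_contra hcl
        push_neg at hcl
        exact hall2 1 (by group) c hc ⟨hh.le, hcl⟩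
      have h2 : g⁻¹ * g⁻¹ < h := hall _ (by group)
      have h1 : g⁻¹ < h := hall _ (by group)
      have e1 : g⁻¹ < g * h := by
        have := mul_lt_mul_right h2 g
        rwa [show g * (g⁻¹ * g⁻¹) = g⁻¹ by group] at this
      have e2 : h < (g*h)*(g*h) := by
        have := mul_lt_mul_left e1 (g*h)
        rwa [show g⁻¹ * (g * h) = h by group] at this
      have gh1 : 1 < g * h := by
        have := mul_lt_mul_right h1 g
        rwa [show g * g⁻¹ = 1 by group] at this
      have f1 : g⁻¹ < h * g := by
        have := mul_lt_mul_left h2 g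
        rwa [show g⁻¹ * g⁻¹ * g = g⁻¹ by group] at this
      have f2 : h < (h*g)*(h*g) := by
        have := mul_lt_mul_right f1 (h*g)
        rwa [show (h*g) * g⁻¹ = h by group] at this
      have hg1 : 1 < h * g := by
        have := mul_lt_mul_left h1 g
        rwa [show g⁻¹ * g = 1 by group] at this
      exact ⟨⟨p1, key _ (ne_of_gt gh1) (Or.inr ⟨hh.le, e2.le⟩)⟩,
             ⟨p2, key _ (ne_of_gt hg1) (Or.inr ⟨hh.le, f2.le⟩)⟩⟩
end

section
/- Let G be an ordered group satisfying GOG1. For each f ≠ 1, the set {g > 1 : g ≍ f} is a convex subset of G. -/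
theorem stmt_6 {G : Type*} [Group G] [LinearOrder G]
    [CovariantClass G G (· * ·) (· < ·)]
    [CovariantClass G G (Function.swap (· * ·)) (· < ·)]
    (h1 : GOG.GOG1 (· * ·) (1 : G) (· < ·) (· ≤ ·))
    (f : G) (hf : f ≠ 1) :
    ∀ a b j : G, 1 < a → GOG.Asymp (· * ·) (1 : G) (· ≤ ·) a f →
      1 < b → GOG.Asymp (· * ·) (1 : G) (· ≤ ·) b f →
      a ≤ j → j ≤ b →
      1 < j ∧ GOG.Asymp (· * ·) (1 : G) (· ≤ ·) j f := by
  intro a b j ha haf hb hbf haj hjb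
  have hj : (1:G) < j := lt_of_lt_of_le ha haj
  have hjne : j ≠ 1 := ne_of_gt hj
  -- inverse closure of centralisers
  have hinv : ∀ g c : G, c ∈ GOG.Cent (· * ·) g → c⁻¹ ∈ GOG.Cent (· * ·) g := by
    intro g c hc
    simp only [GOG.Cent, Set.mem_setOf_eq] at hc ⊢
    have h2 : c⁻¹ * (c * g) * c⁻¹ = c⁻¹ * (g * c) * c⁻¹ := by rw [hc]
    simpa [mul_assoc] using h2.symm
  refine ⟨hj, ?_, ?_⟩
  · -- j ≼ f : lower bound from a ≼ f, upper bound from b ≼ f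
    rcases haf.1 with h | ⟨_, c, hcf, d, hdf, hca, _⟩
    · exact absurd h (ne_of_gt ha)
    rcases hbf.1 with h | ⟨_, c', hcf', d', hdf', _, hbd'⟩
    · exact absurd h (ne_of_gt hb)
    exact Or.inr ⟨hf, c, hcf, d', hdf', hca.trans haj, hjb.trans hbd'⟩
  · -- f ≼ j : use f ≼ a and GOG1 (a ≤ j)
    rcases haf.2 with h | ⟨_, c, hca, d, hda, hcf, hfd⟩
    · exact absurd h hf
    obtain ⟨d', hd'j, hdd'⟩ := h1 j a hj ha haj d hda
    obtain ⟨e', he'j, hce'⟩ := h1 j a hj ha haj c⁻¹ (hinv a c hca)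
    refine Or.inr ⟨hjne, e'⁻¹, hinv j e' he'j, d', hd'j, ?_, hfd.trans hdd'⟩
    have hantitone : ∀ x y : G, x ≤ y → y⁻¹ ≤ x⁻¹ := by
      intro x y hxy
      by_contra h
      push_neg at h
      have h3 : x * x⁻¹ * y < x * y⁻¹ * y :=
        mul_lt_mul_left (mul_lt_mul_right h x) y
      simp [mul_assoc] at h3
      exact absurd hxy (not_le.mpr h3)
    have := hantitone _ _ hce'
    rw [inv_inv] at this
    exact this.trans hcf
end

section
/- Let G be an ordered group satisfying GOG1, and define g ∼ h (for g, h ≠ 1) iff gh⁻¹ ≺ g. Then the following are equivalent: (a) g ∼ h; (b) gh⁻¹ ≺ h; (c) hg⁻¹ ≺ g; (d) h ∼ g. -/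
set_option linter.unusedSectionVars false
section Helpers

variable {G : Type*} [Group G] [LinearOrder G]
    [CovariantClass G G (· * ·) (· < ·)]
    [CovariantClass G G (Function.swap (· * ·)) (· < ·)]

local instance : CovariantClass G G (· * ·) (· ≤ ·) := covariantClass_le_of_lt G G _
local instance : CovariantClass G G (Function.swap (· * ·)) (· ≤ ·) := covariantClass_le_of_lt G G _

theorem my_preceq_def (f g : G) : GOG.Preceq (· * ·) (1:G) (· ≤ ·) f g ↔
    f = 1 ∨ (g ≠ 1 ∧ ∃ a, a * g = g * a ∧ ∃ b, b * g = g * b ∧ a ≤ f ∧ f ≤ b) := Iff.rfl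

theorem my_preceq_inv_left {f g : G} (hp : GOG.Preceq (· * ·) (1:G) (· ≤ ·) f g) :
    GOG.Preceq (· * ·) (1:G) (· ≤ ·) f⁻¹ g := by
  rcases hp with rfl | ⟨hg, a, ha, b, hb, haf, hfb⟩
  · left; simp
  · have ha' : Commute a g := ha
    have hb' : Commute b g := hb
    exact Or.inr ⟨hg, b⁻¹, hb'.inv_left, a⁻¹, ha'.inv_left,
      (inv_le_inv_iff.mpr hfb : b⁻¹ ≤ f⁻¹), (inv_le_inv_iff.mpr haf : f⁻¹ ≤ a⁻¹)⟩

theorem my_preceq_inv_right {f g : G} (hp : GOG.Preceq (· * ·) (1:G) (· ≤ ·) g f) :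
    GOG.Preceq (· * ·) (1:G) (· ≤ ·) g f⁻¹ := by
  rcases hp with rfl | ⟨hf, a, ha, b, hb, haf, hfb⟩
  · left; rfl
  · have ha' : Commute a f := ha
    have hb' : Commute b f := hb
    exact Or.inr ⟨inv_ne_one.mpr hf, a, ha'.inv_right, b, hb'.inv_right, haf, hfb⟩

theorem my_prec_inv {f g : G} :
    GOG.Prec (· * ·) (1:G) (· ≤ ·) f g ↔ GOG.Prec (· * ·) (1:G) (· ≤ ·) f⁻¹ g := by
  constructor
  · rintro ⟨ha, hb⟩
    exact ⟨my_preceq_inv_left ha, fun hc => hb (by simpa using my_preceq_inv_right (f := f⁻¹) hc)⟩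
  · rintro ⟨ha, hb⟩
    exact ⟨by simpa using my_preceq_inv_left ha, fun hc => hb (my_preceq_inv_right hc)⟩

theorem my_key (h1 : GOG.GOG1 (· * ·) (1 : G) (· < ·) (· ≤ ·)) (g h : G) (hh : h ≠ 1)
    (hp : GOG.Prec (· * ·) (1:G) (· ≤ ·) (g * h⁻¹) g) :
    GOG.Prec (· * ·) (1:G) (· ≤ ·) (g * h⁻¹) h := by
  rcases eq_or_ne (g * h⁻¹) 1 with hf1 | hf1
  · obtain rfl : g = h := by rwa [mul_inv_eq_one] at hf1
    exact hp
  obtain ⟨hPfg, hnPgf⟩ := hp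
  set f := g * h⁻¹ with hfdef
  have hfh : f * h = g := inv_mul_cancel_right g h
  have hfg : f⁻¹ * g = h := by rw [hfdef]; group
  constructor
  · -- P f h
    have hm1 : (1:G) < max f f⁻¹ := by
      rcases lt_or_gt_of_ne hf1 with h' | h'
      · exact lt_max_of_lt_right (one_lt_inv_of_inv h')
      · exact lt_max_of_lt_left h'
    have hmf : Commute (max f f⁻¹) f := by
      rcases max_choice f f⁻¹ with hm | hm <;> rw [hm]
      exact (Commute.refl f).inv_left
    have hmlow : (max f f⁻¹)⁻¹ ≤ f := by
      have : f⁻¹ ≤ max f f⁻¹ := le_max_right _ _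
      simpa using inv_le_inv_iff.mpr this
    have main : ∃ d, d * h = h * d ∧ max f f⁻¹ ≤ d := by
      by_cases hub : ∃ b, b * f = f * b ∧ g ≤ b
      · obtain ⟨b, hb, hgb⟩ := hub
        have hall : ∀ a, a * f = f * a → g < a := by
          intro a ha
          by_contra hc
          exact hnPgf (Or.inr ⟨hf1, a, ha, b, hb, not_lt.mp hc, hgb⟩)
        have hcomm : Commute (f * (max f f⁻¹)⁻¹) f := (Commute.refl f).mul_left hmf.inv_left
        have hgfm : g < f * (max f f⁻¹)⁻¹ := hall _ hcomm
        have hhm : h < (max f f⁻¹)⁻¹ := by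
          have := mul_lt_mul_right hgfm f⁻¹
          rwa [hfg, inv_mul_cancel_left] at this
        have hmh : max f f⁻¹ < h⁻¹ := by simpa using inv_lt_inv_iff.mpr hhm
        have h1h : (1:G) < h⁻¹ := hm1.trans hmh
        obtain ⟨d, hd, hmd⟩ := h1 h⁻¹ (max f f⁻¹) h1h hm1 hmh.le (max f f⁻¹) rfl
        have hd' : Commute d h := by
          have : Commute d h⁻¹ := hd
          simpa using this.inv_right
        exact ⟨d, hd', hmd⟩
      · push_neg at hub
        have hall : ∀ a, a * f = f * a → a < g := fun a ha => hub a ha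
        have hcomm : Commute (f * max f f⁻¹) f := (Commute.refl f).mul_left hmf
        have hgfm : f * max f f⁻¹ < g := hall _ hcomm
        have hmh : max f f⁻¹ < h := by
          have := mul_lt_mul_right hgfm f⁻¹
          rwa [hfg, inv_mul_cancel_left] at this
        obtain ⟨d, hd, hmd⟩ := h1 h (max f f⁻¹) (hm1.trans hmh) hm1 hmh.le (max f f⁻¹) rfl
        exact ⟨d, hd, hmd⟩
    obtain ⟨d, hd, hmd⟩ := main
    have hdinv : d⁻¹ * h = h * d⁻¹ := (show Commute d h from hd).inv_left
    refine Or.inr ⟨hh, d⁻¹, hdinv, d, hd, ?_, ?_⟩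
    · exact le_trans (inv_le_inv_iff.mpr hmd) hmlow
    · exact le_trans (le_max_left _ _) hmd
  · -- ¬ P h f
    rintro (rfl | ⟨hf', a, ha, b, hb, hah, hhb⟩)
    · exact hh rfl
    · apply hnPgf
      have hca : Commute (f * a) f := (Commute.refl f).mul_left ha
      have hcb : Commute (f * b) f := (Commute.refl f).mul_left hb
      refine Or.inr ⟨hf1, f * a, hca, f * b, hcb, ?_, ?_⟩
      · have := mul_le_mul_right hah f; rwa [hfh] at this
      · have := mul_le_mul_right hhb f; rwa [hfh] at this
end Helpers


theorem stmt_7 {G : Type*} [Group G] [LinearOrder G]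
    [CovariantClass G G (· * ·) (· < ·)]
    [CovariantClass G G (Function.swap (· * ·)) (· < ·)]
    (h1 : GOG.GOG1 (· * ·) (1 : G) (· < ·) (· ≤ ·))
    (g h : G) (hg : g ≠ 1) (hh : h ≠ 1) :
    [GOG.Sim (· * ·) (1 : G) (·⁻¹) (· ≤ ·) g h,
     GOG.Prec (· * ·) (1 : G) (· ≤ ·) (g * h⁻¹) h,
     GOG.Prec (· * ·) (1 : G) (· ≤ ·) (h * g⁻¹) g,
     GOG.Sim (· * ·) (1 : G) (·⁻¹) (· ≤ ·) h g].TFAE := by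
  have e1 : (g * h⁻¹)⁻¹ = h * g⁻¹ := by rw [mul_inv_rev, inv_inv]
  have e2 : (h * g⁻¹)⁻¹ = g * h⁻¹ := by rw [mul_inv_rev, inv_inv]
  tfae_have 1 ↔ 3 := by
    show GOG.Prec (· * ·) (1:G) (· ≤ ·) (g * h⁻¹) g ↔ _
    rw [my_prec_inv, e1]
  tfae_have 2 ↔ 4 := by
    show _ ↔ GOG.Prec (· * ·) (1:G) (· ≤ ·) (h * g⁻¹) h
    rw [my_prec_inv, e1]
  tfae_have 1 → 2 := fun hp => my_key h1 g h hh hp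
  tfae_have 4 → 3 := fun hp => my_key h1 h g hg hp
  tfae_finish
end

section
/- Let G be an ordered group satisfying GOG1. The relation ∼ on G \ {1} defined by g ∼ h iff gh⁻¹ ≺ g is an equivalence relation. -/
set_option linter.unusedSectionVars false

section Aux
variable {G : Type*} [Group G] [LinearOrder G]
    [CovariantClass G G (· * ·) (· < ·)]
    [CovariantClass G G (Function.swap (· * ·)) (· < ·)]

theorem myInst1 : CovariantClass G G (· * ·) (· ≤ ·) := covariantClass_le_of_lt _ _ _
theorem myInst2 : CovariantClass G G (Function.swap (· * ·)) (· ≤ ·) :=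
  covariantClass_le_of_lt _ _ _

attribute [local instance] myInst1 myInst2

/-- x lies in the convex hull of the centraliser of g. -/
def InH (x g : G) : Prop := ∃ c : G, c * g = g * c ∧ x ≤ c ∧ x⁻¹ ≤ c

theorem comm_inv {a b : G} (h : a * b = b * a) : a * b⁻¹ = b⁻¹ * a := by
  have := congrArg (fun z => b⁻¹ * z * b⁻¹) h
  simpa [mul_assoc] using this.symm

theorem inH_self (g : G) : InH g g := by
  refine ⟨max g g⁻¹, ?_, le_max_left _ _, le_max_right _ _⟩
  rcases max_choice g g⁻¹ with h | h <;> rw [h] <;> simp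

theorem inH_inv {x g : G} (h : InH x g) : InH x⁻¹ g := by
  obtain ⟨c, hc, h1, h2⟩ := h
  exact ⟨c, hc, h2, by simpa using h1⟩

theorem inH_mul {x y g : G} (hx : InH x g) (hy : InH y g) : InH (x * y) g := by
  obtain ⟨c, hc, hc1, hc2⟩ := hx
  obtain ⟨e, he, he1, he2⟩ := hy
  refine ⟨max (c * e) (e * c), ?_, ?_, ?_⟩
  · rcases max_choice (c * e) (e * c) with h | h <;> rw [h]
    · rw [mul_assoc, he, ← mul_assoc, hc, mul_assoc]
    · rw [mul_assoc, hc, ← mul_assoc, he, mul_assoc]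
  · exact le_trans (mul_le_mul' hc1 he1) (le_max_left _ _)
  · rw [mul_inv_rev]
    exact le_trans (mul_le_mul' he2 hc2) (le_max_right _ _)

theorem inH_inv_arg {x g : G} (h : InH x g) : InH x g⁻¹ := by
  obtain ⟨c, hc, h1, h2⟩ := h
  exact ⟨c, comm_inv hc, h1, h2⟩

/-- Chain/comparability lemma for convex hulls of centralisers. -/
theorem inH_chain {p q f v : G} (hf : ¬ InH f p) (hfq : InH f q) (hv : InH v p) : InH v q := by
  obtain ⟨e, he, he1, he2⟩ := hfq
  obtain ⟨c, hc, hc1, hc2⟩ := hv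
  have hce : c ≤ e := by
    by_contra hlt
    push_neg at hlt
    rcases le_or_gt f c with h1 | h1
    · rcases le_or_gt f⁻¹ c with h2 | h2
      · exact hf ⟨c, hc, h1, h2⟩
      · exact absurd (le_trans he2 (le_of_lt hlt)) (not_le_of_gt h2)
    · exact absurd (le_trans he1 (le_of_lt hlt)) (not_le_of_gt h1)
  exact ⟨e, he, le_trans hc1 hce, le_trans hc2 hce⟩

theorem sq_inj {a b : G} (h : a * a = b * b) : a = b := by
  rcases lt_trichotomy a b with hab | hab | hab
  · exact absurd h (ne_of_lt (lt_trans (mul_lt_mul_right hab a) (mul_lt_mul_left hab b)))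
  · exact hab
  · exact absurd h (ne_of_gt (lt_trans (mul_lt_mul_right hab b) (mul_lt_mul_left hab a)))

theorem cent_of_sq {m f₀ : G} (h : f₀ * (m * m) = (m * m) * f₀) : f₀ * m = m * f₀ := by
  have key : (f₀ * m * f₀⁻¹) * (f₀ * m * f₀⁻¹) = m * m := by
    calc (f₀ * m * f₀⁻¹) * (f₀ * m * f₀⁻¹) = f₀ * (m * m) * f₀⁻¹ := by group
    _ = m * m := by rw [h]; group
  have h2 := congrArg (fun z => z * f₀) (sq_inj key)
  simpa [mul_assoc] using h2

theorem one_lt_abs {d : G} (hd : d ≠ 1) : 1 < max d d⁻¹ := by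
  rcases lt_trichotomy d 1 with h | h | h
  · have : 1 < d⁻¹ := one_lt_inv_of_inv (by simpa using h)
    exact lt_of_lt_of_le this (le_max_right _ _)
  · exact absurd h hd
  · exact lt_of_lt_of_le h (le_max_left _ _)

theorem bracket_iff_inH {f g : G} :
    (∃ a ∈ GOG.Cent (· * ·) g, ∃ b ∈ GOG.Cent (· * ·) g, a ≤ f ∧ f ≤ b) ↔ InH f g := by
  constructor
  · rintro ⟨a, ha, b, hb, h1, h2⟩
    have ha' : a * g = g * a := ha
    have hb' : b * g = g * b := hb
    refine ⟨max b a⁻¹, ?_, le_trans h2 (le_max_left _ _), ?_⟩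
    · rcases max_choice b a⁻¹ with h | h <;> rw [h]
      · exact hb'
      · exact (comm_inv ha'.symm).symm
    · have : f⁻¹ ≤ a⁻¹ := by
        have := inv_le_inv_iff.mpr h1
        simpa using this
      exact le_trans this (le_max_right _ _)
  · rintro ⟨c, hc, h1, h2⟩
    refine ⟨c⁻¹, (comm_inv hc.symm).symm, c, hc, ?_, h1⟩
    have := inv_le_inv_iff.mpr h2
    simpa using this

theorem prec_iff' {x y : G} (hx : x ≠ 1) (hy : y ≠ 1) :
    GOG.Prec (· * ·) (1 : G) (· ≤ ·) x y ↔ ¬ InH y x := by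
  constructor
  · rintro ⟨-, hnp⟩ hin
    exact hnp (Or.inr ⟨hx, bracket_iff_inH.mpr hin⟩)
  · intro hin
    constructor
    · exact Or.inr ⟨hy, bracket_iff_inH.mpr (inH_chain hin (inH_self y) (inH_self x))⟩
    · rintro (h | ⟨-, hb⟩)
      · exact hy h
      · exact hin (bracket_iff_inH.mp hb)

theorem prec_one {y : G} (hy : y ≠ 1) : GOG.Prec (· * ·) (1 : G) (· ≤ ·) 1 y := by
  constructor
  · exact Or.inl rfl
  · rintro (h | ⟨h, -⟩)
    · exact hy h
    · exact h rfl

theorem gog1_abs (h1 : GOG.GOG1 (· * ·) (1 : G) (· < ·) (· ≤ ·)) {d w e : G}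
    (hd : d ≠ 1) (h1w : d ≤ w) (h2w : d⁻¹ ≤ w) (he : e * d = d * e) :
    ∃ f₀ : G, f₀ * w = w * f₀ ∧ e ≤ f₀ := by
  have hD : 1 < max d d⁻¹ := one_lt_abs hd
  have hDw : max d d⁻¹ ≤ w := max_le h1w h2w
  have hw : 1 < w := lt_of_lt_of_le hD hDw
  have heD : e ∈ GOG.Cent (· * ·) (max d d⁻¹) := by
    rcases max_choice d d⁻¹ with h | h <;> rw [h]
    · exact he
    · exact comm_inv he
  obtain ⟨f₀, hf₀, hef⟩ := h1 w (max d d⁻¹) hw hD hDw e heD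
  exact ⟨f₀, hf₀, hef⟩

end Aux

theorem stmt_8 {G : Type*} [Group G] [LinearOrder G]
    [CovariantClass G G (· * ·) (· < ·)]
    [CovariantClass G G (Function.swap (· * ·)) (· < ·)]
    (h1 : GOG.GOG1 (· * ·) (1 : G) (· < ·) (· ≤ ·)) :
    (∀ g : G, g ≠ 1 → GOG.Sim (· * ·) (1 : G) (·⁻¹) (· ≤ ·) g g) ∧
    (∀ g h : G, g ≠ 1 → h ≠ 1 → GOG.Sim (· * ·) (1 : G) (·⁻¹) (· ≤ ·) g h →
      GOG.Sim (· * ·) (1 : G) (·⁻¹) (· ≤ ·) h g) ∧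
    (∀ f g h : G, f ≠ 1 → g ≠ 1 → h ≠ 1 →
      GOG.Sim (· * ·) (1 : G) (·⁻¹) (· ≤ ·) f g →
      GOG.Sim (· * ·) (1 : G) (·⁻¹) (· ≤ ·) g h →
      GOG.Sim (· * ·) (1 : G) (·⁻¹) (· ≤ ·) f h) := by
  haveI : CovariantClass G G (· * ·) (· ≤ ·) := myInst1
  haveI : CovariantClass G G (Function.swap (· * ·)) (· ≤ ·) := myInst2
  refine ⟨?_, ?_, ?_⟩
  · -- reflexivity
    intro g hg
    show GOG.Prec (· * ·) (1 : G) (· ≤ ·) (g * g⁻¹) g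
    rw [mul_inv_cancel]
    exact prec_one hg
  · -- symmetry
    intro g h hg hh hs
    by_cases heq : g = h
    · subst heq
      show GOG.Prec (· * ·) (1 : G) (· ≤ ·) (g * g⁻¹) g
      rw [mul_inv_cancel]
      exact prec_one hg
    · have hd : g * h⁻¹ ≠ 1 := fun h0 => heq (mul_inv_eq_one.mp h0)
      have hs' : ¬ InH g (g * h⁻¹) :=
        (prec_iff' hd hg).mp hs
      have hd' : h * g⁻¹ ≠ 1 := fun h0 => heq (mul_inv_eq_one.mp h0).symm
      show GOG.Prec (· * ·) (1 : G) (· ≤ ·) (h * g⁻¹) h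
      apply (prec_iff' hd' hh).mpr
      intro hin
      have e1 : h * g⁻¹ = (g * h⁻¹)⁻¹ := by group
      rw [e1] at hin
      have hin' : InH h (g * h⁻¹) := by
        have := inH_inv_arg hin
        simpa using this
      have hgd : InH g (g * h⁻¹) := by
        have hmul := inH_mul (inH_self (g * h⁻¹)) hin'
        have e2 : (g * h⁻¹) * h = g := by group
        rwa [e2] at hmul
      exact hs' hgd
  · -- transitivity
    intro f g h hf hg hh h12 h23
    by_cases hfg : f = g
    · subst hfg; exact h23
    by_cases hgh : g = h
    · subst hgh; exact h12
    by_cases hfh : f = h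
    · subst hfh
      show GOG.Prec (· * ·) (1 : G) (· ≤ ·) (f * f⁻¹) f
      rw [mul_inv_cancel]
      exact prec_one hf
    have ha1 : f * g⁻¹ ≠ 1 := fun h0 => hfg (mul_inv_eq_one.mp h0)
    have hb1 : g * h⁻¹ ≠ 1 := fun h0 => hgh (mul_inv_eq_one.mp h0)
    have hd1 : f * h⁻¹ ≠ 1 := fun h0 => hfh (mul_inv_eq_one.mp h0)
    have hfa : ¬ InH f (f * g⁻¹) := (prec_iff' ha1 hf).mp h12
    have hgb : ¬ InH g (g * h⁻¹) := (prec_iff' hb1 hg).mp h23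
    have hfb : ¬ InH f (g * h⁻¹) := by
      intro hfb
      have hab : InH (f * g⁻¹) (g * h⁻¹) := inH_chain hfa hfb (inH_self _)
      have hgmem : InH g (g * h⁻¹) := by
        have hmul := inH_mul (inH_inv hab) hfb
        have e2 : (f * g⁻¹)⁻¹ * f = g := by group
        rwa [e2] at hmul
      exact hgb hgmem
    show GOG.Prec (· * ·) (1 : G) (· ≤ ·) (f * h⁻¹) f
    apply (prec_iff' hd1 hf).mpr
    intro hin
    obtain ⟨e, hec, he1, he2⟩ := hin
    have hd : f * h⁻¹ = (f * g⁻¹) * (g * h⁻¹) := by group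
    have hdm : f * h⁻¹ ≤
        (max (max (f * g⁻¹) (f * g⁻¹)⁻¹) (max (g * h⁻¹) (g * h⁻¹)⁻¹)) *
        (max (max (f * g⁻¹) (f * g⁻¹)⁻¹) (max (g * h⁻¹) (g * h⁻¹)⁻¹)) := by
      rw [hd]
      exact mul_le_mul' (le_trans (le_max_left _ _) (le_max_left _ _))
        (le_trans (le_max_left _ _) (le_max_right _ _))
    have hdm' : (f * h⁻¹)⁻¹ ≤
        (max (max (f * g⁻¹) (f * g⁻¹)⁻¹) (max (g * h⁻¹) (g * h⁻¹)⁻¹)) *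
        (max (max (f * g⁻¹) (f * g⁻¹)⁻¹) (max (g * h⁻¹) (g * h⁻¹)⁻¹)) := by
      rw [hd, mul_inv_rev]
      exact mul_le_mul' (le_trans (le_max_right _ _) (le_max_right _ _))
        (le_trans (le_max_right _ _) (le_max_left _ _))
    obtain ⟨f₀, hf₀c, hef⟩ := gog1_abs h1 hd1 hdm hdm' hec
    have hfm := cent_of_sq hf₀c
    have hb1' : f ≤ f₀ := le_trans he1 hef
    have hb2' : f⁻¹ ≤ f₀ := le_trans he2 hef
    rcases max_choice (max (f * g⁻¹) (f * g⁻¹)⁻¹) (max (g * h⁻¹) (g * h⁻¹)⁻¹) with hmc | hmc <;>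
      rw [hmc] at hfm
    · refine hfa ?_
      rcases max_choice (f * g⁻¹) (f * g⁻¹)⁻¹ with h2 | h2 <;> rw [h2] at hfm
      · exact ⟨f₀, hfm, hb1', hb2'⟩
      · refine ⟨f₀, ?_, hb1', hb2'⟩
        have h3 := comm_inv hfm
        simpa using h3
    · refine hfb ?_
      rcases max_choice (g * h⁻¹) (g * h⁻¹)⁻¹ with h2 | h2 <;> rw [h2] at hfm
      · exact ⟨f₀, hfm, hb1', hb2'⟩
      · refine ⟨f₀, ?_, hb1', hb2'⟩
        have h3 := comm_inv hfm
        simpa using h3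
end

section
/- Let G be an ordered group satisfying GOG1 and g, h ∈ G \ {1}. If g ∼ h⁻¹ or g ≺ h, then the commutator [g,h] = g⁻¹h⁻¹gh satisfies [g,h] ≺ h. -/
set_option linter.unusedSectionVars false

namespace GOGAux

variable {G : Type*} [Group G] [LinearOrder G]
    [CovariantClass G G (· * ·) (· < ·)]
    [CovariantClass G G (Function.swap (· * ·)) (· < ·)]

local instance : MulLeftMono G := covariantClass_le_of_lt _ _ _
local instance : MulRightMono G := covariantClass_le_of_lt _ _ _

lemma mem_cent {x y : G} : x ∈ GOG.Cent (· * ·) y ↔ x * y = y * x := Iff.rfl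

lemma cent_one (y : G) : (1:G) ∈ GOG.Cent (· * ·) y := by
  simp [GOG.Cent]

lemma cent_self (y : G) : y ∈ GOG.Cent (· * ·) y := rfl

lemma cent_inv {x y : G} (hx : x ∈ GOG.Cent (· * ·) y) : x⁻¹ ∈ GOG.Cent (· * ·) y := by
  have hx' : x * y = y * x := hx
  show x⁻¹ * y = y * x⁻¹
  calc x⁻¹ * y = x⁻¹ * (y * x) * x⁻¹ := by group
  _ = x⁻¹ * (x * y) * x⁻¹ := by rw [← hx']
  _ = y * x⁻¹ := by group

lemma cent_mul {x x' y : G} (hx : x ∈ GOG.Cent (· * ·) y) (hx' : x' ∈ GOG.Cent (· * ·) y) :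
    x * x' ∈ GOG.Cent (· * ·) y := by
  have h1 : x * y = y * x := hx
  have h2 : x' * y = y * x' := hx'
  show x * x' * y = y * (x * x')
  calc x * x' * y = x * (x' * y) := by group
  _ = x * (y * x') := by rw [h2]
  _ = (x * y) * x' := by group
  _ = (y * x) * x' := by rw [h1]
  _ = y * (x * x') := by group

lemma cent_inv_base {x y : G} (hx : x ∈ GOG.Cent (· * ·) y) : x ∈ GOG.Cent (· * ·) y⁻¹ := by
  have h1 : x * y = y * x := hx
  show x * y⁻¹ = y⁻¹ * x
  calc x * y⁻¹ = y⁻¹ * (y * x) * y⁻¹ := by group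
  _ = y⁻¹ * (x * y) * y⁻¹ := by rw [h1]
  _ = y⁻¹ * x := by group

lemma cent_inv_base' {x y : G} (hx : x ∈ GOG.Cent (· * ·) y⁻¹) : x ∈ GOG.Cent (· * ·) y := by
  have := cent_inv_base hx
  simpa using this

lemma cent_conj {w x t : G} (hw : w ∈ GOG.Cent (· * ·) (t⁻¹ * x * t)) :
    t * w * t⁻¹ ∈ GOG.Cent (· * ·) x := by
  have hw' : w * (t⁻¹ * x * t) = (t⁻¹ * x * t) * w := hw
  show t * w * t⁻¹ * x = x * (t * w * t⁻¹)
  calc t * w * t⁻¹ * x = t * (w * (t⁻¹ * x * t)) * t⁻¹ := by group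
  _ = t * ((t⁻¹ * x * t) * w) * t⁻¹ := by rw [hw']
  _ = x * (t * w * t⁻¹) := by group

lemma pos_inv {a : G} (h : a < 1) : 1 < a⁻¹ := by
  have := mul_lt_mul_right h a⁻¹
  simpa using this

lemma neg_inv {a : G} (h : 1 < a) : a⁻¹ < 1 := by
  have := mul_lt_mul_right h a⁻¹
  simpa using this

lemma inv_flip_lt {a b : G} (h : a < b⁻¹) : b < a⁻¹ := by
  have := inv_lt_inv_iff.mpr h
  simpa using this

lemma conj_pos (t : G) {x : G} (hx : 1 < x) : 1 < t⁻¹ * x * t := by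
  have h1 : t⁻¹ * t < t⁻¹ * (x * t) := mul_lt_mul_right (by simpa using mul_lt_mul_left hx t) t⁻¹
  calc (1:G) = t⁻¹ * t := by group
  _ < t⁻¹ * (x * t) := h1
  _ = t⁻¹ * x * t := by group

lemma conj_le_one (t : G) {x : G} (hx : x ≤ 1) : t⁻¹ * x * t ≤ 1 := by
  have h1 : x * t ≤ t := mul_le_of_le_one_left' hx
  calc t⁻¹ * x * t = t⁻¹ * (x * t) := by group
  _ ≤ t⁻¹ * t := mul_le_mul_right h1 t⁻¹
  _ = 1 := by group

lemma small_of_not_preceq_pos {x y : G} (hy : y ≠ 1) (hx : 1 < x)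
    (hn : ¬ GOG.Preceq (· * ·) (1:G) (· ≤ ·) x y) :
    ∀ w ∈ GOG.Cent (· * ·) y, w < x := by
  intro w hw
  by_contra hc
  push_neg at hc
  exact hn (Or.inr ⟨hy, 1, cent_one y, w, hw, hx.le, hc⟩)

lemma big_of_not_preceq_neg {x y : G} (hy : y ≠ 1) (hx : x < 1)
    (hn : ¬ GOG.Preceq (· * ·) (1:G) (· ≤ ·) x y) :
    ∀ w ∈ GOG.Cent (· * ·) y, x < w := by
  intro w hw
  by_contra hc
  push_neg at hc
  exact hn (Or.inr ⟨hy, w, hw, 1, cent_one y, hc, hx.le⟩)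

lemma kernel (h1 : GOG.GOG1 (· * ·) (1 : G) (· < ·) (· ≤ ·)) {x c z T t : G}
    (hx : 1 < x) (hc : 1 < c) (hcf : c ≤ t⁻¹ * x * t)
    (hz : z ∈ GOG.Cent (· * ·) c) (hTz : T ≤ z)
    (hb : ∀ w ∈ GOG.Cent (· * ·) x, w < T) (hcomm : t * T = T * t) : False := by
  obtain ⟨w₀, hw₀, hzw⟩ := h1 (t⁻¹ * x * t) c (conj_pos t hx) hc hcf z hz
  have h2 : t * w₀ * t⁻¹ < T := hb _ (cent_conj hw₀)
  have h3 : w₀ < T := by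
    calc w₀ = t⁻¹ * (t * w₀ * t⁻¹) * t := by group
    _ < t⁻¹ * T * t := mul_lt_mul_left (mul_lt_mul_right h2 t⁻¹) t
    _ = t⁻¹ * (T * t) := by group
    _ = t⁻¹ * (t * T) := by rw [← hcomm]
    _ = T := by group
  exact absurd (hTz.trans hzw) (not_le.mpr h3)

lemma kernelD (h1 : GOG.GOG1 (· * ·) (1 : G) (· < ·) (· ≤ ·)) {x c z T : G}
    (hx : 1 < x) (hc : 1 < c) (hcf : c ≤ x)
    (hz : z ∈ GOG.Cent (· * ·) c) (hTz : T ≤ z)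
    (hb : ∀ w ∈ GOG.Cent (· * ·) x, w < T) : False :=
  kernel h1 (t := 1) hx hc (by simpa using hcf) hz hTz hb (by group)
lemma caseB (h1 : GOG.GOG1 (· * ·) (1 : G) (· < ·) (· ≤ ·)) {g h : G}
    (hg : g ≠ 1) (hh : h ≠ 1)
    (hBp : GOG.Preceq (· * ·) (1:G) (· ≤ ·) g h)
    (hBn : ¬ GOG.Preceq (· * ·) (1:G) (· ≤ ·) h g) :
    GOG.Prec (· * ·) (1:G) (· ≤ ·) (g⁻¹ * h⁻¹ * g * h) h := by
  rcases hBp with hg1 | ⟨-, a, ha, b, hb, hag, hgb⟩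
  · exact absurd hg1 hg
  have ha' : a * h = h * a := ha
  have hb' : b * h = h * b := hb
  constructor
  · -- Preceq c h
    refine Or.inr ⟨hh, b⁻¹ * a, cent_mul (cent_inv hb) ha, a⁻¹ * b,
      cent_mul (cent_inv ha) hb, ?_, ?_⟩
    · calc b⁻¹ * a = b⁻¹ * (h⁻¹ * (a * h)) := by rw [ha']; group
      _ ≤ b⁻¹ * (h⁻¹ * (g * h)) :=
        mul_le_mul_right (mul_le_mul_right (mul_le_mul_left hag h) h⁻¹) b⁻¹
      _ ≤ g⁻¹ * (h⁻¹ * (g * h)) := mul_le_mul_left (inv_le_inv_iff.mpr hgb) _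
      _ = g⁻¹ * h⁻¹ * g * h := by group
    · calc g⁻¹ * h⁻¹ * g * h = g⁻¹ * (h⁻¹ * (g * h)) := by group
      _ ≤ a⁻¹ * (h⁻¹ * (g * h)) := mul_le_mul_left (inv_le_inv_iff.mpr hag) _
      _ ≤ a⁻¹ * (h⁻¹ * (b * h)) :=
        mul_le_mul_right (mul_le_mul_right (mul_le_mul_left hgb h) h⁻¹) a⁻¹
      _ = a⁻¹ * b := by rw [hb']; group
  · -- ¬ Preceq h c
    intro hp
    rcases hp with hh1 | ⟨hcne, α, hα, β, hβ, hαh, hhβ⟩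
    · exact hh hh1
    rcases hh.lt_or_gt with hhlt | hhgt
    · -- h < 1 : T = h⁻¹, z = α⁻¹
      have FB' := big_of_not_preceq_neg hg hhlt hBn
      have FB : ∀ w ∈ GOG.Cent (· * ·) g, w < h⁻¹ :=
        fun w hw => inv_flip_lt (FB' w⁻¹ (cent_inv hw))
      have hTz : h⁻¹ ≤ α⁻¹ := inv_le_inv_iff.mpr hαh
      rcases lt_trichotomy (g⁻¹ * h⁻¹ * g * h) 1 with hclt | hceq | hcgt
      · have hcpos : 1 < (g⁻¹ * h⁻¹ * g * h)⁻¹ := pos_inv hclt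
        have hzc : α⁻¹ ∈ GOG.Cent (· * ·) (g⁻¹ * h⁻¹ * g * h)⁻¹ := cent_inv_base (cent_inv hα)
        rcases hg.lt_or_gt with hglt | hggt
        · refine kernel h1 (x := g⁻¹) (t := h) (pos_inv hglt) hcpos ?_ hzc hTz
            (fun w hw => FB w (cent_inv_base' hw)) (by group)
          calc (g⁻¹ * h⁻¹ * g * h)⁻¹ = (h⁻¹ * g⁻¹ * h) * g := by group
          _ ≤ h⁻¹ * g⁻¹ * h := mul_le_of_le_one_right' hglt.le
        · refine kernelD h1 (x := g) hggt hcpos ?_ hzc hTz FB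
          calc (g⁻¹ * h⁻¹ * g * h)⁻¹ = (h⁻¹ * g⁻¹ * h) * g := by group
          _ ≤ 1 * g := mul_le_mul_left (conj_le_one h (neg_inv hggt).le) g
          _ = g := one_mul g
      · exact hcne hceq
      · have hzc : α⁻¹ ∈ GOG.Cent (· * ·) (g⁻¹ * h⁻¹ * g * h) := cent_inv hα
        rcases hg.lt_or_gt with hglt | hggt
        · refine kernelD h1 (x := g⁻¹) (pos_inv hglt) hcgt ?_ hzc hTz
            (fun w hw => FB w (cent_inv_base' hw))
          calc g⁻¹ * h⁻¹ * g * h = g⁻¹ * (h⁻¹ * g * h) := by group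
          _ ≤ g⁻¹ := mul_le_of_le_one_right' (conj_le_one h hglt.le)
        · refine kernel h1 (x := g) (t := h) hggt hcgt ?_ hzc hTz FB (by group)
          calc g⁻¹ * h⁻¹ * g * h = g⁻¹ * (h⁻¹ * g * h) := by group
          _ ≤ h⁻¹ * g * h := mul_le_of_le_one_left' (neg_inv hggt).le
    · -- h > 1 : T = h, z = β
      have FB := small_of_not_preceq_pos hg hhgt hBn
      rcases lt_trichotomy (g⁻¹ * h⁻¹ * g * h) 1 with hclt | hceq | hcgt
      · have hcpos : 1 < (g⁻¹ * h⁻¹ * g * h)⁻¹ := pos_inv hclt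
        have hzc : β ∈ GOG.Cent (· * ·) (g⁻¹ * h⁻¹ * g * h)⁻¹ := cent_inv_base hβ
        rcases hg.lt_or_gt with hglt | hggt
        · refine kernel h1 (x := g⁻¹) (t := h) (pos_inv hglt) hcpos ?_ hzc hhβ
            (fun w hw => FB w (cent_inv_base' hw)) rfl
          calc (g⁻¹ * h⁻¹ * g * h)⁻¹ = (h⁻¹ * g⁻¹ * h) * g := by group
          _ ≤ h⁻¹ * g⁻¹ * h := mul_le_of_le_one_right' hglt.le
        · refine kernelD h1 (x := g) hggt hcpos ?_ hzc hhβ FB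
          calc (g⁻¹ * h⁻¹ * g * h)⁻¹ = (h⁻¹ * g⁻¹ * h) * g := by group
          _ ≤ 1 * g := mul_le_mul_left (conj_le_one h (neg_inv hggt).le) g
          _ = g := one_mul g
      · exact hcne hceq
      · rcases hg.lt_or_gt with hglt | hggt
        · refine kernelD h1 (x := g⁻¹) (pos_inv hglt) hcgt ?_ hβ hhβ
            (fun w hw => FB w (cent_inv_base' hw))
          calc g⁻¹ * h⁻¹ * g * h = g⁻¹ * (h⁻¹ * g * h) := by group
          _ ≤ g⁻¹ := mul_le_of_le_one_right' (conj_le_one h hglt.le)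
        · refine kernel h1 (x := g) (t := h) hggt hcgt ?_ hβ hhβ FB rfl
          calc g⁻¹ * h⁻¹ * g * h = g⁻¹ * (h⁻¹ * g * h) := by group
          _ ≤ h⁻¹ * g * h := mul_le_of_le_one_left' (neg_inv hggt).le
lemma caseA (h1 : GOG.GOG1 (· * ·) (1 : G) (· < ·) (· ≤ ·)) {g u : G}
    (hg : g ≠ 1) (hH : g⁻¹ * u ≠ 1)
    (hAn : ¬ GOG.Preceq (· * ·) (1:G) (· ≤ ·) g u) :
    GOG.Prec (· * ·) (1:G) (· ≤ ·) (g⁻¹ * u⁻¹ * g * u) (g⁻¹ * u) := by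
  by_cases hu1 : u = 1
  · subst hu1
    constructor
    · exact Or.inl (by group)
    · intro hp
      rcases hp with hH1 | ⟨hcne, -⟩
      · exact hH hH1
      · exact hcne (by group)
  rcases hg.lt_or_gt with hglt | hggt
  · -- g < 1
    have FA' := big_of_not_preceq_neg hu1 hglt hAn
    have FA : ∀ w ∈ GOG.Cent (· * ·) u, w < g⁻¹ :=
      fun w hw => inv_flip_lt (FA' w⁻¹ (cent_inv hw))
    have hgu : g < u := FA' u (cent_self u)
    have hgu2 : g < u * u := FA' _ (cent_mul (cent_self u) (cent_self u))
    rcases lt_or_gt_of_ne hu1 with hult | hugt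
    · -- (g<1, u<1)
      constructor
      · refine Or.inr ⟨hH, (g⁻¹*u)⁻¹*(g⁻¹*u)⁻¹*(g⁻¹*u)⁻¹,
          cent_mul (cent_mul (cent_inv (cent_self _)) (cent_inv (cent_self _))) (cent_inv (cent_self _)),
          g⁻¹*u, cent_self _, ?_, ?_⟩
        · have s1 : u⁻¹ * g * u⁻¹ ≤ 1 := by
            calc u⁻¹ * g * u⁻¹ ≤ u⁻¹ * (u*u) * u⁻¹ :=
              mul_le_mul_left (mul_le_mul_right hgu2.le u⁻¹) u⁻¹
            _ = 1 := by group
          have s2 : u⁻¹ * g * u⁻¹ * g ≤ g := by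
            calc u⁻¹ * g * u⁻¹ * g ≤ 1 * g := mul_le_mul_left s1 g
            _ = g := one_mul g
          calc (g⁻¹*u)⁻¹*(g⁻¹*u)⁻¹*(g⁻¹*u)⁻¹ = (u⁻¹*g) * (u⁻¹ * g * u⁻¹ * g) := by group
          _ ≤ (u⁻¹*g) * g := mul_le_mul_right s2 _
          _ = u⁻¹ * (g * g) := by group
          _ ≤ u⁻¹ * (g * u) := mul_le_mul_right (mul_le_mul_right hgu.le g) u⁻¹
          _ = u⁻¹ * g * u := by group
          _ ≤ g⁻¹ * (u⁻¹ * g * u) := le_mul_of_one_le_left' (pos_inv hglt).le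
          _ = g⁻¹ * u⁻¹ * g * u := by group
        · calc g⁻¹ * u⁻¹ * g * u = g⁻¹ * (u⁻¹ * (g * u)) := by group
          _ ≤ g⁻¹ * (u⁻¹ * (u * u)) :=
            mul_le_mul_right (mul_le_mul_right (mul_le_mul_left hgu.le u) u⁻¹) g⁻¹
          _ = g⁻¹ * u := by group
      · intro hp
        rcases hp with hH1 | ⟨hcne, α, hα, β, hβ, hαH, hHβ⟩
        · exact hH hH1
        have s7 : u⁻¹ * u⁻¹ ≤ g⁻¹ := by
          have h7 := inv_le_inv_iff.mpr hgu2.le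
          calc u⁻¹*u⁻¹ = (u*u)⁻¹ := by group
          _ ≤ g⁻¹ := h7
        have s8 : (1:G) ≤ u * g⁻¹ * u := by
          calc (1:G) = u * (u⁻¹*u⁻¹) * u := by group
          _ ≤ u * g⁻¹ * u := mul_le_mul_left (mul_le_mul_right s7 u) u
        have hTz : g⁻¹ ≤ β * β := by
          calc g⁻¹ = g⁻¹ * 1 := by group
          _ ≤ g⁻¹ * (u * g⁻¹ * u) := mul_le_mul_right s8 g⁻¹
          _ = (g⁻¹*u) * (g⁻¹*u) := by group
          _ ≤ β * β := mul_le_mul' hHβ hHβ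
        rcases lt_trichotomy (g⁻¹ * u⁻¹ * g * u) 1 with hclt | hceq | hcgt
        · refine kernelD h1 (x := u⁻¹) (pos_inv hult) (pos_inv hclt) ?_
            (cent_inv_base (cent_mul hβ hβ)) hTz (fun w hw => FA w (cent_inv_base' hw))
          calc (g⁻¹ * u⁻¹ * g * u)⁻¹ = u⁻¹ * (g⁻¹ * u * g) := by group
          _ ≤ u⁻¹ := mul_le_of_le_one_right' (conj_le_one g hult.le)
        · exact hcne hceq
        · refine kernel h1 (x := u⁻¹) (t := g) (pos_inv hult) hcgt ?_
            (cent_mul hβ hβ) hTz (fun w hw => FA w (cent_inv_base' hw)) (by group)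
          calc g⁻¹ * u⁻¹ * g * u = (g⁻¹ * u⁻¹ * g) * u := by group
          _ ≤ g⁻¹ * u⁻¹ * g := mul_le_of_le_one_right' hult.le
    · -- (g<1, u>1)
      constructor
      · refine Or.inr ⟨hH, (g⁻¹*u)⁻¹, cent_inv (cent_self _), g⁻¹*u, cent_self _, ?_, ?_⟩
        · have hc' : (g⁻¹ * u⁻¹ * g * u)⁻¹ ≤ g⁻¹ * u := by
            calc (g⁻¹ * u⁻¹ * g * u)⁻¹ = (u⁻¹ * g⁻¹ * u) * g := by group
            _ ≤ u⁻¹ * g⁻¹ * u := mul_le_of_le_one_right' hglt.le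
            _ = u⁻¹ * (g⁻¹ * u) := by group
            _ ≤ g⁻¹ * u := mul_le_of_le_one_left' (neg_inv hugt).le
          have h8 := inv_le_inv_iff.mpr hc'
          simpa using h8
        · calc g⁻¹ * u⁻¹ * g * u = g⁻¹ * (u⁻¹ * g * u) := by group
          _ ≤ g⁻¹ * 1 := mul_le_mul_right (conj_le_one u hglt.le) g⁻¹
          _ = g⁻¹ := by group
          _ ≤ g⁻¹ * u := le_mul_of_one_le_right' hugt.le
      · intro hp
        rcases hp with hH1 | ⟨hcne, α, hα, β, hβ, hαH, hHβ⟩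
        · exact hH hH1
        have hTz : g⁻¹ ≤ β := by
          calc g⁻¹ ≤ g⁻¹ * u := le_mul_of_one_le_right' hugt.le
          _ ≤ β := hHβ
        rcases lt_trichotomy (g⁻¹ * u⁻¹ * g * u) 1 with hclt | hceq | hcgt
        · refine kernel h1 (x := u) (t := g) hugt (pos_inv hclt) ?_
            (cent_inv_base hβ) hTz FA (by group)
          calc (g⁻¹ * u⁻¹ * g * u)⁻¹ = u⁻¹ * (g⁻¹ * u * g) := by group
          _ ≤ g⁻¹ * u * g := mul_le_of_le_one_left' (neg_inv hugt).le
        · exact hcne hceq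
        · refine kernelD h1 (x := u) hugt hcgt ?_ hβ hTz FA
          calc g⁻¹ * u⁻¹ * g * u = (g⁻¹ * u⁻¹ * g) * u := by group
          _ ≤ 1 * u := mul_le_mul_left (conj_le_one g (neg_inv hugt).le) u
          _ = u := one_mul u
  · -- g > 1
    have FA := small_of_not_preceq_pos hu1 hggt hAn
    have hug : u < g := FA u (cent_self u)
    have hu2 : u * u < g := FA _ (cent_mul (cent_self u) (cent_self u))
    have huinv : u⁻¹ < g := FA _ (cent_inv (cent_self u))
    rcases lt_or_gt_of_ne hu1 with hult | hugt
    · -- (g>1, u<1)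
      constructor
      · refine Or.inr ⟨hH, g⁻¹*u, cent_self _, (g⁻¹*u)⁻¹, cent_inv (cent_self _), ?_, ?_⟩
        · have hc' : (g⁻¹ * u⁻¹ * g * u)⁻¹ ≤ (g⁻¹*u)⁻¹ := by
            calc (g⁻¹ * u⁻¹ * g * u)⁻¹ = u⁻¹ * (g⁻¹ * u * g) := by group
            _ ≤ u⁻¹ := mul_le_of_le_one_right' (conj_le_one g hult.le)
            _ ≤ u⁻¹ * g := le_mul_of_one_le_right' hggt.le
            _ = (g⁻¹*u)⁻¹ := by group
          have h8 := inv_le_inv_iff.mpr hc'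
          simpa using h8
        · calc g⁻¹ * u⁻¹ * g * u = (g⁻¹ * (u⁻¹ * g)) * u := by group
          _ ≤ g⁻¹ * (u⁻¹ * g) := mul_le_of_le_one_right' hult.le
          _ ≤ g⁻¹ * (g * g) := mul_le_mul_right (mul_le_mul_left huinv.le g) g⁻¹
          _ = g := by group
          _ ≤ u⁻¹ * g := le_mul_of_one_le_left' (pos_inv hult).le
          _ = (g⁻¹*u)⁻¹ := by group
      · intro hp
        rcases hp with hH1 | ⟨hcne, α, hα, β, hβ, hαH, hHβ⟩
        · exact hH hH1
        have hTz : g ≤ α⁻¹ := by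
          calc g ≤ u⁻¹ * g := le_mul_of_one_le_left' (pos_inv hult).le
          _ = (g⁻¹*u)⁻¹ := by group
          _ ≤ α⁻¹ := inv_le_inv_iff.mpr hαH
        rcases lt_trichotomy (g⁻¹ * u⁻¹ * g * u) 1 with hclt | hceq | hcgt
        · refine kernelD h1 (x := u⁻¹) (pos_inv hult) (pos_inv hclt) ?_
            (cent_inv_base (cent_inv hα)) hTz (fun w hw => FA w (cent_inv_base' hw))
          calc (g⁻¹ * u⁻¹ * g * u)⁻¹ = u⁻¹ * (g⁻¹ * u * g) := by group
          _ ≤ u⁻¹ := mul_le_of_le_one_right' (conj_le_one g hult.le)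
        · exact hcne hceq
        · refine kernel h1 (x := u⁻¹) (t := g) (pos_inv hult) hcgt ?_
            (cent_inv hα) hTz (fun w hw => FA w (cent_inv_base' hw)) rfl
          calc g⁻¹ * u⁻¹ * g * u = (g⁻¹ * u⁻¹ * g) * u := by group
          _ ≤ g⁻¹ * u⁻¹ * g := mul_le_of_le_one_right' hult.le
    · -- (g>1, u>1)
      constructor
      · refine Or.inr ⟨hH, g⁻¹*u, cent_self _, (g⁻¹*u)⁻¹*(g⁻¹*u)⁻¹*(g⁻¹*u)⁻¹,
          cent_mul (cent_mul (cent_inv (cent_self _)) (cent_inv (cent_self _))) (cent_inv (cent_self _)),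
          ?_, ?_⟩
        · have s5 : u * u ≤ g * u := mul_le_mul_left hug.le u
          calc g⁻¹*u = g⁻¹ * (u⁻¹ * (u * u)) := by group
          _ ≤ g⁻¹ * (u⁻¹ * (g * u)) := mul_le_mul_right (mul_le_mul_right s5 u⁻¹) g⁻¹
          _ = g⁻¹ * u⁻¹ * g * u := by group
        · have r1 : (1:G) ≤ u⁻¹ * g * u⁻¹ := by
            calc (1:G) = u⁻¹ * (u*u) * u⁻¹ := by group
            _ ≤ u⁻¹ * g * u⁻¹ := mul_le_mul_left (mul_le_mul_right hu2.le u⁻¹) u⁻¹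
          have r2 : g ≤ u⁻¹ * g * u⁻¹ * g := by
            calc g = 1 * g := (one_mul g).symm
            _ ≤ (u⁻¹ * g * u⁻¹) * g := mul_le_mul_left r1 g
          calc g⁻¹ * u⁻¹ * g * u = g⁻¹ * (u⁻¹ * (g * u)) := by group
          _ ≤ u⁻¹ * (g * u) := mul_le_of_le_one_left' (neg_inv hggt).le
          _ ≤ u⁻¹ * (g * g) := mul_le_mul_right (mul_le_mul_right hug.le g) u⁻¹
          _ ≤ u⁻¹ * (g * (u⁻¹ * g * u⁻¹ * g)) := mul_le_mul_right (mul_le_mul_right r2 g) u⁻¹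
          _ = (g⁻¹*u)⁻¹*(g⁻¹*u)⁻¹*(g⁻¹*u)⁻¹ := by group
      · intro hp
        rcases hp with hH1 | ⟨hcne, α, hα, β, hβ, hαH, hHβ⟩
        · exact hH hH1
        have r1 : (1:G) ≤ u⁻¹ * g * u⁻¹ := by
          calc (1:G) = u⁻¹ * (u*u) * u⁻¹ := by group
          _ ≤ u⁻¹ * g * u⁻¹ := mul_le_mul_left (mul_le_mul_right hu2.le u⁻¹) u⁻¹
        have hZH : g ≤ (g⁻¹*u)⁻¹ * (g⁻¹*u)⁻¹ := by
          calc g = 1 * g := (one_mul g).symm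
          _ ≤ (u⁻¹ * g * u⁻¹) * g := mul_le_mul_left r1 g
          _ = (g⁻¹*u)⁻¹ * (g⁻¹*u)⁻¹ := by group
        have hTz : g ≤ α⁻¹ * α⁻¹ :=
          hZH.trans (mul_le_mul' (inv_le_inv_iff.mpr hαH) (inv_le_inv_iff.mpr hαH))
        rcases lt_trichotomy (g⁻¹ * u⁻¹ * g * u) 1 with hclt | hceq | hcgt
        · refine kernel h1 (x := u) (t := g) hugt (pos_inv hclt) ?_
            (cent_inv_base (cent_mul (cent_inv hα) (cent_inv hα))) hTz FA rfl
          calc (g⁻¹ * u⁻¹ * g * u)⁻¹ = u⁻¹ * (g⁻¹ * u * g) := by group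
          _ ≤ g⁻¹ * u * g := mul_le_of_le_one_left' (neg_inv hugt).le
        · exact hcne hceq
        · refine kernelD h1 (x := u) hugt hcgt ?_
            (cent_mul (cent_inv hα) (cent_inv hα)) hTz FA
          calc g⁻¹ * u⁻¹ * g * u = (g⁻¹ * u⁻¹ * g) * u := by group
          _ ≤ 1 * u := mul_le_mul_left (conj_le_one g (neg_inv hugt).le) u
          _ = u := one_mul u

end GOGAux

theorem stmt_9 {G : Type*} [Group G] [LinearOrder G]
    [CovariantClass G G (· * ·) (· < ·)]
    [CovariantClass G G (Function.swap (· * ·)) (· < ·)]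
    (h1 : GOG.GOG1 (· * ·) (1 : G) (· < ·) (· ≤ ·))
    (g h : G) (hg : g ≠ 1) (hh : h ≠ 1)
    (hyp : GOG.Sim (· * ·) (1 : G) (·⁻¹) (· ≤ ·) g h⁻¹ ∨
      GOG.Prec (· * ·) (1 : G) (· ≤ ·) g h) :
    GOG.Prec (· * ·) (1 : G) (· ≤ ·) (g⁻¹ * h⁻¹ * g * h) h := by
  rcases hyp with hS | hB
  · have hS' : GOG.Prec (· * ·) (1:G) (· ≤ ·) (g * h⁻¹⁻¹) g := hS
    rw [inv_inv] at hS'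
    obtain ⟨-, hAn⟩ := hS'
    have hH : g⁻¹ * (g * h) ≠ 1 := by
      intro e
      apply hh
      calc h = g⁻¹ * (g * h) := by group
      _ = 1 := e
    have key := GOGAux.caseA h1 hg hH hAn
    have e1 : g⁻¹ * (g * h)⁻¹ * g * (g * h) = g⁻¹ * h⁻¹ * g * h := by group
    have e2 : g⁻¹ * (g * h) = h := by group
    rw [e1, e2] at key
    exact key
  · obtain ⟨hBp, hBn⟩ := hB
    exact GOGAux.caseB h1 hg hh hBp hBn
end

section
/- Let K be an ordered field and V an ordered vector space over K. The group of strictly increasing affine maps x ↦ λ·x + a (λ ∈ K^{>0}, a ∈ V), under composition and ordered by eventual comparison (equivalently, lexicographically on (λ, a)), is a growth order group. -/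
set_option linter.unusedSectionVars false


section AffineGOG

variable {K V : Type*} [Field K] [LinearOrder K] [IsStrictOrderedRing K]
    [AddCommGroup V] [LinearOrder V]
    [CovariantClass V V (· + ·) (· < ·)]
    [Module K V] [PosSMulStrictMono K V] [SMulPosStrictMono K V]

local notation "G" => ({c : K // 0 < c} × V)

def gmul : G → G → G := fun p q =>
  (⟨p.1.1 * q.1.1, mul_pos p.1.2 q.1.2⟩, p.1.1 • q.2 + p.2)

def gone : G := (⟨1, one_pos⟩, 0)

def ginv : G → G := fun p =>
  (⟨(p.1.1)⁻¹, inv_pos.2 p.1.2⟩, -((p.1.1)⁻¹ • p.2))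

def glt : G → G → Prop := fun p q => p.1.1 < q.1.1 ∨ (p.1.1 = q.1.1 ∧ p.2 < q.2)

def gle : G → G → Prop := fun p q => p.1.1 < q.1.1 ∨ (p.1.1 = q.1.1 ∧ p.2 ≤ q.2)

lemma gext {p q : G} (h1 : p.1.1 = q.1.1) (h2 : p.2 = q.2) : p = q := by
  obtain ⟨⟨a, ha⟩, x⟩ := p; obtain ⟨⟨b, hb⟩, y⟩ := q
  simp_all

lemma gext_iff {p q : G} : p = q ↔ p.1.1 = q.1.1 ∧ p.2 = q.2 := by
  constructor
  · rintro rfl; exact ⟨rfl, rfl⟩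
  · rintro ⟨h1, h2⟩; exact gext h1 h2

lemma key_smul_ne_zero {c : K} (hc : c ≠ 0) {v : V} (hv : v ≠ 0) :
    (c : K) • v ≠ 0 := by
  have main : ∀ d : K, 0 < d → d • v ≠ 0 := by
    intro d hd
    have hm : StrictMono (fun w : V => d • w) := fun a b h => smul_lt_smul_of_pos_left h hd
    have : Function.Injective (fun w : V => d • w) := hm.injective
    intro h
    exact hv (this (by simpa using h))
  rcases hc.lt_or_gt with h | h
  · intro h0
    have : (-c) • v ≠ 0 := main (-c) (neg_pos.2 h)
    apply this; rw [neg_smul, h0, neg_zero]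
  · exact main c h

lemma mem_cent_iff (h g : G) :
    h ∈ GOG.Cent gmul g ↔ (h.1.1 - 1) • g.2 = (g.1.1 - 1) • h.2 := by
  unfold GOG.Cent gmul
  rw [Set.mem_setOf_eq, gext_iff]
  constructor
  · rintro ⟨-, h2⟩
    simp only [sub_smul, one_smul]
    rw [sub_eq_sub_iff_add_eq_add]
    simpa [add_comm] using h2
  · intro h2
    refine ⟨mul_comm _ _, ?_⟩
    simp only [sub_smul, one_smul, sub_eq_sub_iff_add_eq_add] at h2
    rw [eq_comm]; simpa [add_comm] using h2.symm

end AffineGOG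

section AffineGOG2

variable {K V : Type*} [Field K] [LinearOrder K] [IsStrictOrderedRing K]
    [AddCommGroup V] [LinearOrder V]
    [CovariantClass V V (· + ·) (· < ·)]
    [Module K V] [PosSMulStrictMono K V] [SMulPosStrictMono K V]

local notation "G" => ({c : K // 0 < c} × V)

lemma gone_spec : (gone : G).1.1 = 1 ∧ (gone : G).2 = 0 := ⟨rfl, rfl⟩

lemma ne_gone_iff {g : G} : g ≠ gone ↔ g.1.1 ≠ 1 ∨ g.2 ≠ 0 := by
  rw [Ne, gext_iff, not_and_or]; rfl

/-- scaling-type centraliser members -/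
lemma cent_scale_mem {g : G} (hg : g.1.1 ≠ 1) (μ : K) (hμ : 0 < μ) :
    ((⟨μ, hμ⟩, ((μ - 1) / (g.1.1 - 1)) • g.2) : G) ∈ GOG.Cent gmul g := by
  rw [mem_cent_iff]
  simp only
  rw [smul_smul, mul_div_cancel₀]
  exact sub_ne_zero.2 hg

/-- translation centraliser characterization -/
lemma cent_trans_iff {g : G} (hg1 : g.1.1 = 1) (hg2 : g.2 ≠ 0) (h : G) :
    h ∈ GOG.Cent gmul g ↔ h.1.1 = 1 := by
  rw [mem_cent_iff, hg1, sub_self, zero_smul]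
  constructor
  · intro he
    by_contra hne
    exact key_smul_ne_zero (sub_ne_zero.2 hne) hg2 he
  · intro he; rw [he, sub_self, zero_smul]

lemma preceq_of_scale {g : G} (hg : g.1.1 ≠ 1) (f : G) :
    GOG.Preceq gmul gone gle f g := by
  right
  refine ⟨ne_gone_iff.2 (Or.inl hg), ⟨⟨f.1.1 / 2, half_pos f.1.2⟩, _⟩,
    cent_scale_mem hg _ _, ⟨⟨f.1.1 + 1, add_pos f.1.2 one_pos⟩, _⟩, cent_scale_mem hg _ _, ?_, ?_⟩
  · left; exact half_lt_self f.1.2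
  · left; exact lt_add_one _

lemma not_preceq_of_trans {f g : G} (hf : f.1.1 ≠ 1) (hg : g.1.1 = 1) :
    ¬ GOG.Preceq gmul gone gle f g := by
  rintro (rfl | ⟨hne, a, ha, b, hb, haf, hfb⟩)
  · exact hf rfl
  by_cases hg2 : g.2 = 0
  · exact hne (gext hg hg2)
  · have ha1 : a.1.1 = 1 := (cent_trans_iff hg hg2 a).1 ha
    have hb1 : b.1.1 = 1 := (cent_trans_iff hg hg2 b).1 hb
    have h1 : (1:K) ≤ f.1.1 := by
      rcases haf with h | ⟨h, -⟩
      · rw [ha1] at h; exact le_of_lt h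
      · rw [ha1] at h; exact le_of_eq h
    have h2 : f.1.1 ≤ 1 := by
      rcases hfb with h | ⟨h, -⟩
      · rw [hb1] at h; exact le_of_lt h
      · rw [hb1] at h; exact le_of_eq h
    exact hf (le_antisymm h2 h1)

lemma preceq_of_trans {f g : G} (hf : f.1.1 = 1) (hg1 : g.1.1 = 1) (hg2 : g.2 ≠ 0) :
    GOG.Preceq gmul gone gle f g := by
  right
  have hfc : f ∈ GOG.Cent gmul g := (cent_trans_iff hg1 hg2 f).2 hf
  exact ⟨ne_gone_iff.2 (Or.inr hg2), f, hfc, f, hfc, Or.inr ⟨rfl, le_refl _⟩,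
    Or.inr ⟨rfl, le_refl _⟩⟩

lemma preceq_trans_char {f g : G} (hg1 : g.1.1 = 1) (hg2 : g.2 ≠ 0) :
    GOG.Preceq gmul gone gle f g ↔ f.1.1 = 1 := by
  constructor
  · intro h; by_contra hf; exact not_preceq_of_trans hf hg1 h
  · intro hf; exact preceq_of_trans hf hg1 hg2

end AffineGOG2

section AffineGOG3

variable {K V : Type*} [Field K] [LinearOrder K] [IsStrictOrderedRing K]
    [AddCommGroup V] [LinearOrder V]
    [CovariantClass V V (· + ·) (· < ·)]
    [Module K V] [PosSMulStrictMono K V] [SMulPosStrictMono K V]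

local notation "G" => ({c : K // 0 < c} × V)

lemma add_lt_add_right' {a b : V} (h : a < b) (c : V) : a + c < b + c := by
  rw [add_comm a c, add_comm b c]; exact add_lt_add_right h c

lemma isOrderedGroup :
    GOG.IsOrderedGroup (gmul : G → G → G) gone ginv glt := by
  refine ⟨?_, ?_, ?_, ?_, ?_, ?_, ?_, ?_⟩
  · intro a b c
    refine gext (mul_assoc _ _ _) ?_
    show (a.1.1 * b.1.1) • c.2 + (a.1.1 • b.2 + a.2) = a.1.1 • (b.1.1 • c.2 + b.2) + a.2
    rw [smul_add, mul_smul, add_assoc]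
  · intro a; exact gext (one_mul _) (by show (1:K) • a.2 + 0 = a.2; simp)
  · intro a; exact gext (mul_one _) (by show a.1.1 • (0:V) + a.2 = a.2; simp)
  · intro a
    refine gext (inv_mul_cancel₀ (ne_of_gt a.1.2)) ?_
    show (a.1.1)⁻¹ • a.2 + -((a.1.1)⁻¹ • a.2) = 0
    simp
  · rintro a (h | ⟨-, h⟩)
    exacts [lt_irrefl _ h, lt_irrefl _ h]
  · rintro a b c (h | ⟨h, h2⟩) (h' | ⟨h', h2'⟩)
    · exact Or.inl (h.trans h')
    · exact Or.inl (h'.symm ▸ h)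
    · exact Or.inl (h ▸ h')
    · exact Or.inr ⟨h.trans h', h2.trans h2'⟩
  · intro a b
    rcases lt_trichotomy a.1.1 b.1.1 with h | h | h
    · exact Or.inl (Or.inl h)
    · rcases lt_trichotomy a.2 b.2 with h2 | h2 | h2
      · exact Or.inl (Or.inr ⟨h, h2⟩)
      · exact Or.inr (Or.inl (gext h h2))
      · exact Or.inr (Or.inr (Or.inr ⟨h.symm, h2⟩))
    · exact Or.inr (Or.inr (Or.inl h))
  · rintro f g h (hlt | ⟨he, hlt⟩)
    · constructor
      · left; exact mul_lt_mul_of_pos_left hlt f.1.2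
      · left; exact mul_lt_mul_of_pos_right hlt f.1.2
    · constructor
      · right
        exact ⟨by show f.1.1 * g.1.1 = f.1.1 * h.1.1; rw [he], add_lt_add_right' (smul_lt_smul_of_pos_left hlt f.1.2) f.2⟩
      · right
        refine ⟨by show g.1.1 * f.1.1 = h.1.1 * f.1.1; rw [he], ?_⟩
        show g.1.1 • f.2 + g.2 < h.1.1 • f.2 + h.2
        rw [(Subtype.ext he : g.1 = h.1)]
        exact add_lt_add_right hlt _

end AffineGOG3

section AffineGOG4

variable {K V : Type*} [Field K] [LinearOrder K] [IsStrictOrderedRing K]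
    [AddCommGroup V] [LinearOrder V]
    [CovariantClass V V (· + ·) (· < ·)]
    [Module K V] [PosSMulStrictMono K V] [SMulPosStrictMono K V]

local notation "G" => ({c : K // 0 < c} × V)

lemma gog1 : GOG.GOG1 (gmul : G → G → G) gone glt gle := by
  intro f g hf hg hgf g₀ hg₀
  by_cases hf1 : f.1.1 = 1
  · -- f is a positive translation, hence so is g
    have hf2 : 0 < f.2 := by
      rcases hf with h | ⟨-, h⟩
      · exact absurd h (by rw [hf1]; exact lt_irrefl _)
      · exact h
    have hg1 : g.1.1 = 1 := by
      have h1 : (1:K) ≤ g.1.1 := by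
        rcases hg with h | ⟨h, -⟩
        · exact le_of_lt h
        · exact le_of_eq h
      have h2 : g.1.1 ≤ 1 := by
        rcases hgf with h | ⟨h, -⟩
        · rw [hf1] at h; exact le_of_lt h
        · rw [hf1] at h; exact le_of_eq h
      exact le_antisymm h2 h1
    have hg2 : 0 < g.2 := by
      rcases hg with h | ⟨-, h⟩
      · exact absurd h (by rw [hg1]; exact lt_irrefl _)
      · exact h
    have hg₀1 : g₀.1.1 = 1 := (cent_trans_iff hg1 (ne_of_gt hg2) g₀).1 hg₀
    exact ⟨g₀, (cent_trans_iff hf1 (ne_of_gt hf2) g₀).2 hg₀1,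
      Or.inr ⟨rfl, le_refl _⟩⟩
  · refine ⟨(⟨g₀.1.1 + 1, add_pos g₀.1.2 one_pos⟩,
      ((g₀.1.1 + 1 - 1) / (f.1.1 - 1)) • f.2), cent_scale_mem hf1 _ _, ?_⟩
    left; exact lt_add_one _

lemma gog2 : GOG.GOG2 (gmul : G → G → G) gone glt := by
  intro f g hf hg H
  have hg1 : g.1.1 = 1 := by
    by_contra hne
    have := H _ (cent_scale_mem hne (f.1.1 + 1) (add_pos f.1.2 one_pos))
    rcases this with h | ⟨h, -⟩
    · simp only at h; linarith
    · simp only at h; linarith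
  have hg2 : 0 < g.2 := by
    rcases hg with h | ⟨-, h⟩
    · exact absurd h (by rw [hg1]; exact lt_irrefl _)
    · exact h
  have hf1 : 1 < f.1.1 := by
    have := H (⟨1, one_pos⟩, f.2) ((cent_trans_iff hg1 (ne_of_gt hg2) _).2 rfl)
    rcases this with h | ⟨-, h⟩
    · exact h
    · exact absurd h (lt_irrefl _)
  right
  constructor
  · show g.1.1 * f.1.1 = f.1.1 * g.1.1; exact mul_comm _ _
  · show g.1.1 • f.2 + g.2 < f.1.1 • g.2 + f.2
    have e1 : g.1.1 • f.2 = f.2 := by rw [hg1, one_smul]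
    have e2 : g.2 < f.1.1 • g.2 := by
      calc g.2 = (1:K) • g.2 := (one_smul _ _).symm
        _ < f.1.1 • g.2 := smul_lt_smul_of_pos_right hf1 hg2
    rw [e1, add_comm (f.1.1 • g.2) f.2]
    exact add_lt_add_right e2 f.2

end AffineGOG4

section AffineGOG5

variable {K V : Type*} [Field K] [LinearOrder K] [IsStrictOrderedRing K]
    [AddCommGroup V] [LinearOrder V]
    [CovariantClass V V (· + ·) (· < ·)]
    [Module K V] [PosSMulStrictMono K V] [SMulPosStrictMono K V]

local notation "G" => ({c : K // 0 < c} × V)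

lemma cent_scale0_snd {s : G} (hs : s.2 = 0) (hs1 : s.1.1 ≠ 1) {a : G}
    (ha : a ∈ GOG.Cent gmul s) : a.2 = 0 := by
  rw [mem_cent_iff, hs, smul_zero] at ha
  by_contra h
  exact key_smul_ne_zero (sub_ne_zero.2 hs1) h ha.symm

lemma gmul_inv_self (f : G) : gmul f (ginv f) = gone := by
  refine gext ?_ ?_
  · show f.1.1 * (f.1.1)⁻¹ = 1
    exact mul_inv_cancel₀ (ne_of_gt f.1.2)
  · show f.1.1 • (-((f.1.1)⁻¹ • f.2)) + f.2 = 0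
    rw [smul_neg, smul_inv_smul₀ (ne_of_gt f.1.2), neg_add_cancel]

lemma prec_gone {f : G} (hf : f ≠ gone) : GOG.Prec gmul gone gle gone f := by
  refine ⟨Or.inl rfl, ?_⟩
  rintro (h | ⟨h, -⟩)
  · exact hf h
  · exact h rfl

lemma gog3 : GOG.GOG3 (gmul : G → G → G) gone ginv glt gle := by
  intro g hg
  by_cases hg1 : g.1.1 = 1
  · -- translation case
    have hg2 : g.2 ≠ 0 := by
      rcases ne_gone_iff.1 hg with h | h
      · exact absurd hg1 h
      · exact h
    -- choose a positive translation
    obtain ⟨c, hc⟩ : ∃ c : V, 0 < c := by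
      rcases hg2.lt_or_gt with h | h
      · exact ⟨-g.2, neg_pos.2 h⟩
      · exact ⟨g.2, h⟩
    set s : G := (⟨1, one_pos⟩, c) with hs
    have hs1 : s.1.1 = 1 := rfl
    have hs2 : s.2 ≠ 0 := ne_of_gt hc
    refine ⟨s, ⟨Or.inr ⟨rfl, hc⟩, ?_, ?_⟩,
      preceq_of_trans hs1 hg1 hg2, preceq_of_trans hg1 hs1 hs2⟩
    · -- abelian centraliser
      intro a ha b hb
      have ha1 : a.1.1 = 1 := (cent_trans_iff hs1 hs2 a).1 ha
      have hb1 : b.1.1 = 1 := (cent_trans_iff hs1 hs2 b).1 hb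
      refine gext (mul_comm _ _) ?_
      show a.1.1 • b.2 + a.2 = b.1.1 • a.2 + b.2
      rw [ha1, hb1, one_smul, one_smul, add_comm]
    · -- scaling property
      intro f ⟨h1, h2⟩
      have hf1 : f.1.1 = 1 := (preceq_trans_char hs1 hs2).1 h1
      have hfne : f ≠ gone := by
        rintro rfl
        rcases h2 with h | ⟨h, -⟩
        · exact hs2 (gext_iff.1 h).2
        · exact h rfl
      refine ⟨f, (cent_trans_iff hs1 hs2 f).2 hf1, hfne, ?_⟩
      show GOG.Prec gmul gone gle (gmul f (ginv f)) f
      rw [gmul_inv_self]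
      exact prec_gone hfne
  · -- scaling case
    have h2pos : (0:K) < 2 := two_pos
    set s : G := (⟨2, h2pos⟩, 0) with hs
    have hs1 : s.1.1 ≠ 1 := by norm_num
    refine ⟨s, ⟨Or.inl one_lt_two, ?_, ?_⟩,
      preceq_of_scale hg1 s, preceq_of_scale hs1 g⟩
    · intro a ha b hb
      have ha2 : a.2 = 0 := cent_scale0_snd rfl hs1 ha
      have hb2 : b.2 = 0 := cent_scale0_snd rfl hs1 hb
      refine gext (mul_comm _ _) ?_
      show a.1.1 • b.2 + a.2 = b.1.1 • a.2 + b.2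
      rw [ha2, hb2, smul_zero, smul_zero]
    · intro f ⟨h1, h2⟩
      have hf1 : f.1.1 ≠ 1 := by
        intro h
        exact not_preceq_of_trans hs1 h h2
      refine ⟨(f.1, 0), ?_, ?_, ?_⟩
      · rw [mem_cent_iff]
        show (f.1.1 - 1) • (0:V) = ((2:K) - 1) • (0:V)
        rw [smul_zero, smul_zero]
      · exact ne_gone_iff.2 (Or.inl hf1)
      · show GOG.Prec gmul gone gle (gmul (f.1, 0) (ginv f)) (f.1, 0)
        have he : gmul ((f.1, 0) : G) (ginv f) = (⟨1, one_pos⟩, -f.2) := by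
          refine gext ?_ ?_
          · show f.1.1 * (f.1.1)⁻¹ = 1
            exact mul_inv_cancel₀ (ne_of_gt f.1.2)
          · show f.1.1 • (-((f.1.1)⁻¹ • f.2)) + 0 = -f.2
            rw [smul_neg, smul_inv_smul₀ (ne_of_gt f.1.2), add_zero]
        rw [he]
        exact ⟨preceq_of_scale (g := (f.1, 0)) hf1 _, not_preceq_of_trans (f := (f.1, 0)) hf1 rfl⟩

lemma isGrowthOrderGroup :
    GOG.IsGrowthOrderGroup (gmul : G → G → G) gone ginv glt gle :=
  ⟨isOrderedGroup, gog1, gog2, gog3⟩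

end AffineGOG5


theorem stmt_16 {K V : Type*} [Field K] [LinearOrder K] [IsStrictOrderedRing K]
    [AddCommGroup V] [LinearOrder V]
    [CovariantClass V V (· + ·) (· < ·)]
    [Module K V] [PosSMulStrictMono K V] [SMulPosStrictMono K V] :
    GOG.IsGrowthOrderGroup
      (fun p q : {c : K // 0 < c} × V =>
        ((⟨p.1.1 * q.1.1, mul_pos p.1.2 q.1.2⟩ : {c : K // 0 < c}),
          p.1.1 • q.2 + p.2))
      (((⟨1, one_pos⟩ : {c : K // 0 < c}), (0 : V)) : {c : K // 0 < c} × V)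
      (fun p : {c : K // 0 < c} × V =>
        ((⟨(p.1.1)⁻¹, inv_pos.2 p.1.2⟩ : {c : K // 0 < c}), -((p.1.1)⁻¹ • p.2)))
      (fun p q : {c : K // 0 < c} × V => p.1.1 < q.1.1 ∨ (p.1.1 = q.1.1 ∧ p.2 < q.2))
      (fun p q : {c : K // 0 < c} × V => p.1.1 < q.1.1 ∨ (p.1.1 = q.1.1 ∧ p.2 ≤ q.2)) :=
  isGrowthOrderGroup
end

section
/- Let G be a growth order group and N ⊆ G a ≼-initial subgroup (nonempty, and f ∈ N, g ≼ f imply g ∈ N). Then N is a convex subgroup of G and is itself a growth order group. -/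
theorem stmt_17 {G : Type*} [Group G] [LinearOrder G]
    [CovariantClass G G (· * ·) (· < ·)]
    [CovariantClass G G (Function.swap (· * ·)) (· < ·)]
    (h1 : GOG.GOG1 (· * ·) (1 : G) (· < ·) (· ≤ ·))
    (h2 : GOG.GOG2 (· * ·) (1 : G) (· < ·))
    (h3 : GOG.GOG3 (· * ·) (1 : G) (·⁻¹) (· < ·) (· ≤ ·))
    (N : Subgroup G)
    (hinit : ∀ f ∈ N, ∀ g : G, GOG.Preceq (· * ·) (1 : G) (· ≤ ·) g f → g ∈ N) :
    (∀ a ∈ N, ∀ b ∈ N, ∀ c : G, a ≤ c → c ≤ b → c ∈ N) ∧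
    GOG.IsGrowthOrderGroup ((· * ·) : N → N → N) (1 : N)
      ((·⁻¹) : N → N) ((· < ·) : N → N → Prop) ((· ≤ ·) : N → N → Prop) := by
  -- any centraliser element of a nonidentity element of N lies in N
  have memN : ∀ g : G, g ∈ N → g ≠ 1 → ∀ a ∈ GOG.Cent (· * ·) g, a ∈ N := by
    intro g hg hne a ha
    exact hinit g hg a (Or.inr ⟨hne, a, ha, a, ha, le_refl a, le_refl a⟩)
  -- convexity
  have hconv : ∀ a ∈ N, ∀ b ∈ N, ∀ c : G, a ≤ c → c ≤ b → c ∈ N := by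
    intro a ha b hb c hac hcb
    set m : G := b ⊔ a⁻¹ with hm
    haveI : CovariantClass G G (· * ·) (· ≤ ·) := covariantClass_le_of_lt _ _ _
    haveI : CovariantClass G G (Function.swap (· * ·)) (· ≤ ·) := covariantClass_le_of_lt _ _ _
    by_cases hm1 : m = 1
    · have hb1 : b ≤ 1 := hm1 ▸ le_sup_left
      have ha1 : (1 : G) ≤ a := inv_le_one'.mp (hm1 ▸ le_sup_right)
      have : c = 1 := le_antisymm (hcb.trans hb1) (ha1.trans hac)
      exact this ▸ N.one_mem
    · have hmN : m ∈ N := by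
        rcases le_total b a⁻¹ with h | h
        · rw [hm, sup_eq_right.mpr h]; exact N.inv_mem ha
        · rw [hm, sup_eq_left.mpr h]; exact hb
      have hmem : m⁻¹ ∈ GOG.Cent (· * ·) m := by
        simp [GOG.Cent]
      have hmem' : m ∈ GOG.Cent (· * ·) m := rfl
      have hminv : m⁻¹ ≤ c := by
        have h' : m⁻¹ ≤ a := by
          have := inv_le_inv_iff.mpr (le_sup_right : a⁻¹ ≤ m)
          simpa using this
        exact h'.trans hac
      have hcm : c ≤ m := hcb.trans le_sup_left
      exact hinit m hmN c (Or.inr ⟨hm1, m⁻¹, hmem, m, hmem', hminv, hcm⟩)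
  -- transfer lemmas between N and G
  have cent_iff : ∀ g h : N, h ∈ GOG.Cent ((· * ·) : N → N → N) g ↔
      (h : G) ∈ GOG.Cent (· * ·) (g : G) := by
    intro g h
    exact Subtype.ext_iff
  have ne_iff : ∀ g : N, g ≠ (1 : N) ↔ (g : G) ≠ 1 := by
    intro g
    exact ⟨fun h e => h (Subtype.ext e), fun h e => h (congrArg Subtype.val e)⟩
  have preceq_iff : ∀ f g : N, GOG.Preceq ((· * ·) : N → N → N) 1 (· ≤ ·) f g ↔
      GOG.Preceq (· * ·) (1 : G) (· ≤ ·) (f : G) (g : G) := by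
    intro f g
    constructor
    · rintro (rfl | ⟨hg, a, ha, b, hb, haf, hfb⟩)
      · exact Or.inl rfl
      · exact Or.inr ⟨(ne_iff g).mp hg, a, (cent_iff g a).mp ha, b, (cent_iff g b).mp hb,
          haf, hfb⟩
    · rintro (h1 | ⟨hg, a, ha, b, hb, haf, hfb⟩)
      · exact Or.inl (Subtype.ext h1)
      · have haN : a ∈ N := memN g g.2 hg a ha
        have hbN : b ∈ N := memN g g.2 hg b hb
        exact Or.inr ⟨(ne_iff g).mpr hg, ⟨a, haN⟩, (cent_iff g ⟨a, haN⟩).mpr ha,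
          ⟨b, hbN⟩, (cent_iff g ⟨b, hbN⟩).mpr hb, haf, hfb⟩
  have prec_iff : ∀ f g : N, GOG.Prec ((· * ·) : N → N → N) 1 (· ≤ ·) f g ↔
      GOG.Prec (· * ·) (1 : G) (· ≤ ·) (f : G) (g : G) := by
    intro f g
    unfold GOG.Prec
    rw [preceq_iff, preceq_iff]
  refine ⟨hconv, ?_, ?_, ?_, ?_⟩
  · -- IsOrderedGroup
    refine ⟨fun a b c => mul_assoc a b c, fun a => one_mul a, fun a => mul_one a,
      fun a => inv_mul_cancel a, fun a => lt_irrefl a, fun a b c => lt_trans,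
      fun a b => lt_trichotomy a b, fun f g h hl => ?_⟩
    constructor
    · show (((f * g : N) : G)) < ((f * h : N) : G)
      push_cast
      exact mul_lt_mul_right (Subtype.coe_lt_coe.mpr hl) _
    · show (((g * f : N) : G)) < ((h * f : N) : G)
      push_cast
      exact mul_lt_mul_left (Subtype.coe_lt_coe.mpr hl) _
  · -- GOG1
    intro f g hf hg hgf g₀ hg₀
    obtain ⟨f₀, hf₀c, hf₀le⟩ := h1 (f : G) (g : G) hf hg hgf (g₀ : G) ((cent_iff g g₀).mp hg₀)
    have hfne : (f : G) ≠ 1 := ne_of_gt hf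
    have hf₀N : f₀ ∈ N := memN f f.2 hfne f₀ hf₀c
    exact ⟨⟨f₀, hf₀N⟩, (cent_iff f ⟨f₀, hf₀N⟩).mpr hf₀c, hf₀le⟩
  · -- GOG2
    intro f g hf hg hcent
    have hgne : (g : G) ≠ 1 := ne_of_gt hg
    have : ∀ h ∈ GOG.Cent (· * ·) (g : G), h < (f : G) := by
      intro h hh
      have hhN : h ∈ N := memN g g.2 hgne h hh
      exact hcent ⟨h, hhN⟩ ((cent_iff g ⟨h, hhN⟩).mpr hh)
    have := h2 (f : G) (g : G) hf hg this
    show (((g * f : N) : G)) < ((f * g : N) : G)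
    push_cast
    exact this
  · -- GOG3
    intro g hgne
    obtain ⟨s, ⟨hs1, hscomm, hsscal⟩, hsg, hgs⟩ := h3 (g : G) ((ne_iff g).mp hgne)
    have hsN : s ∈ N := hinit g g.2 s hsg
    have hsne : s ≠ 1 := ne_of_gt hs1
    set S : N := ⟨s, hsN⟩ with hS
    refine ⟨S, ⟨hs1, ?_, ?_⟩, (preceq_iff S g).mpr hsg, (preceq_iff g S).mpr hgs⟩
    · intro a ha b hb
      exact Subtype.ext (hscomm a ((cent_iff S a).mp ha) b ((cent_iff S b).mp hb))
    · intro f hf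
      obtain ⟨g₀, hg₀c, hg₀ne, hg₀sim⟩ := hsscal (f : G)
        ⟨(preceq_iff f S).mp hf.1, (preceq_iff S f).mp hf.2⟩
      have hg₀N : g₀ ∈ N := memN s hsN hsne g₀ hg₀c
      refine ⟨⟨g₀, hg₀N⟩, (cent_iff S ⟨g₀, hg₀N⟩).mpr hg₀c, (ne_iff _).mpr hg₀ne, ?_⟩
      show GOG.Prec ((· * ·) : N → N → N) 1 (· ≤ ·) (⟨g₀, hg₀N⟩ * f⁻¹) ⟨g₀, hg₀N⟩
      rw [prec_iff]
      exact hg₀sim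
end

section
/- Let G be a growth order group and N a normal, ≼-initial subgroup such that for all f, g ∈ G \ N, [f,g] ∈ N implies f ≍ g. Then the quotient G/N, with the order gN < hN iff g < h (for g, h in distinct cosets), is a growth order group. -/
namespace StmtAux
open GOG
set_option linter.unusedSectionVars false

variable {G : Type*} [Group G] [LinearOrder G]
  [CovariantClass G G (· * ·) (· < ·)]
  [CovariantClass G G (Function.swap (· * ·)) (· < ·)]

-- (imports of aux1 lemmas assumed present; re-stated here for the test)
lemma mle_left (a : G) {b c : G} (h : b ≤ c) : a * b ≤ a * c := by
  rcases h.lt_or_eq with h | h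
  · exact (mul_lt_mul_right h a).le
  · rw [h]
lemma mle_right (a : G) {b c : G} (h : b ≤ c) : b * a ≤ c * a := by
  rcases h.lt_or_eq with h | h
  · exact (mul_lt_mul_left h a).le
  · rw [h]
lemma inv_le_one_of {a : G} (h : (1:G) ≤ a) : a⁻¹ ≤ 1 := by
  have := mle_left a⁻¹ h; simpa using this
lemma one_lt_inv_of {a : G} (h : a < 1) : 1 < a⁻¹ := by
  have := mul_lt_mul_right h a⁻¹; simpa using this
lemma inv_antitone {a b : G} (h : a ≤ b) : b⁻¹ ≤ a⁻¹ := by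
  have h1 := mle_left b⁻¹ h
  have h2 := mle_right a⁻¹ h1
  simpa [mul_assoc] using h2
lemma one_mem_cent (g : G) : (1:G) ∈ Cent (· * ·) g := by
  show 1 * g = g * 1; simp
lemma self_mem_cent (g : G) : g ∈ Cent (· * ·) g := rfl
lemma sq_self_mem_cent (g : G) : g * g ∈ Cent (· * ·) g := by
  show g * g * g = g * (g * g); rw [mul_assoc]
lemma inv_mem_cent {h g : G} (hh : h ∈ Cent (· * ·) g) : h⁻¹ ∈ Cent (· * ·) g :=
  (Commute.inv_left (hh : Commute h g) : Commute h⁻¹ g)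
lemma mem_cent_symm {h g : G} (hh : h ∈ Cent (· * ·) g) : g ∈ Cent (· * ·) h :=
  (Eq.symm (hh : h * g = g * h) : g * h = h * g)
lemma mem_cent_inv_right {h g : G} (hh : h ∈ Cent (· * ·) g) : h ∈ Cent (· * ·) g⁻¹ :=
  (Commute.inv_right (hh : Commute h g) : Commute h g⁻¹)
lemma cent_of_sq {f m : G} (hf : f ∈ Cent (· * ·) (m * m)) : f ∈ Cent (· * ·) m := by
  have hf' : f * (m * m) = (m * m) * f := hf
  show f * m = m * f
  rcases lt_trichotomy (f * m) (m * f) with h | h | h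
  · exfalso
    have : f * (m*m) < (m*m) * f := by
      calc f * (m*m) = f*m*m := by rw [mul_assoc]
        _ < m*f*m := mul_lt_mul_left h m
        _ = m*(f*m) := by rw [mul_assoc]
        _ < m*(m*f) := mul_lt_mul_right h m
        _ = m*m*f := by rw [mul_assoc]
    exact absurd hf' (ne_of_lt this)
  · exact h
  · exfalso
    have : (m*m) * f < f * (m*m) := by
      calc m*m*f = m*(m*f) := by rw [mul_assoc]
        _ < m*(f*m) := mul_lt_mul_right h m
        _ = m*f*m := by rw [mul_assoc]
        _ < f*m*m := mul_lt_mul_left h m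
        _ = f*(m*m) := by rw [mul_assoc]
    exact absurd hf' (ne_of_gt this)
lemma preceq_inv_left {x y : G} (h : Preceq (· * ·) (1:G) (· ≤ ·) x y) :
    Preceq (· * ·) (1:G) (· ≤ ·) x⁻¹ y := by
  rcases h with h | ⟨hy, a, ha, b, hb, h1, h2⟩
  · exact Or.inl (by simp [h])
  · exact Or.inr ⟨hy, b⁻¹, inv_mem_cent hb, a⁻¹, inv_mem_cent ha,
      inv_antitone h2, inv_antitone h1⟩
lemma preceq_inv_right {x y : G} (h : Preceq (· * ·) (1:G) (· ≤ ·) x y) :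
    Preceq (· * ·) (1:G) (· ≤ ·) x y⁻¹ := by
  rcases h with h | ⟨hy, a, ha, b, hb, h1, h2⟩
  · exact Or.inl h
  · exact Or.inr ⟨inv_ne_one.mpr hy, a, mem_cent_inv_right ha, b, mem_cent_inv_right hb, h1, h2⟩
lemma asymp_inv_left {x y : G} (h : Asymp (· * ·) (1:G) (· ≤ ·) x y) :
    Asymp (· * ·) (1:G) (· ≤ ·) x⁻¹ y :=
  ⟨preceq_inv_left h.1, preceq_inv_right h.2⟩
lemma preceq_one_elim {x : G} (h : Preceq (· * ·) (1:G) (· ≤ ·) x 1) : x = 1 := by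
  rcases h with h | ⟨hy, _⟩
  · exact h
  · exact absurd rfl hy

lemma asymp_of_cent {c s : G} (hc : c ∈ Cent (· * ·) s) (hc1 : c ≠ 1) (hs1 : s ≠ 1) :
    Asymp (· * ·) (1:G) (· ≤ ·) c s :=
  ⟨Or.inr ⟨hs1, c, hc, c, hc, le_refl c, le_refl c⟩,
   Or.inr ⟨hc1, s, mem_cent_symm hc, s, mem_cent_symm hc, le_refl s, le_refl s⟩⟩

/-! ### The key lemma -/

/-- Core of the key lemma, for positive `m` and `c`. -/
lemma crux_core (h1 : GOG1 (· * ·) (1 : G) (· < ·) (· ≤ ·)) {s : G}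
    (hsc : Scaling (· * ·) (1:G) (·⁻¹) (· < ·) (· ≤ ·) s)
    {m c : G} (hms : Asymp (· * ·) (1:G) (· ≤ ·) m s)
    (hc : c ∈ Cent (· * ·) s) (hm : 1 < m) (hcpos : 1 < c) :
    Preceq (· * ·) (1:G) (· ≤ ·) c m := by
  obtain ⟨hs1, hs2, hs3⟩ := hsc
  obtain ⟨d, hdC, hd1, hsim⟩ := hs3 m hms
  have P2 : ¬ Preceq (· * ·) (1:G) (· ≤ ·) d (d * m⁻¹) := hsim.2
  by_cases hn1 : d * m⁻¹ = 1
  · have hdm : d = m := mul_inv_eq_one.mp hn1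
    have hcd : c * d = d * c := hs2 c hc d hdC
    have hcm : c ∈ Cent (· * ·) m := by rw [← hdm]; exact hcd
    exact Or.inr ⟨hm.ne', c, hcm, c, hcm, le_refl c, le_refl c⟩
  · have HB : ∀ a ∈ Cent (· * ·) (d * m⁻¹), ∀ b ∈ Cent (· * ·) (d * m⁻¹),
        ¬(a ≤ d ∧ d ≤ b) := by
      intro a ha b hb hab
      exact P2 (Or.inr ⟨hn1, a, ha, b, hb, hab.1, hab.2⟩)
    have hd_pos : 1 < d := by
      rcases lt_trichotomy 1 d with h | h | h
      · exact h
      · exact absurd h.symm hd1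
      · exfalso
        have h' := HB (d*m⁻¹) (self_mem_cent _) 1 (one_mem_cent _)
        have hnd : d < d * m⁻¹ := by
          by_contra hle
          push_neg at hle
          exact h' ⟨hle, h.le⟩
        have h2 : d * 1 < d * m⁻¹ := by simpa using hnd
        have h3 : (1:G) < m⁻¹ := lt_of_mul_lt_mul_left' h2
        have h4 : m * 1 < m * m⁻¹ := mul_lt_mul_right h3 m
        have h5 : m < 1 := by simpa using h4
        exact absurd hm (not_lt.mpr h5.le)
    -- every element of Cent (d m⁻¹) is < d
    have hCn : ∀ h ∈ Cent (· * ·) (d * m⁻¹), h < d := by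
      intro h hh
      have h' := HB 1 (one_mem_cent _) h hh
      by_contra hle
      push_neg at hle
      exact h' ⟨hd_pos.le, hle⟩
    -- (d m⁻¹)² < d
    have hnn : (d * m⁻¹) * (d * m⁻¹) < d := hCn _ (sq_self_mem_cent _)
    -- d ≤ m * m
    have hdm2 : d ≤ m * m := by
      have step1 : (d * m⁻¹) * (d * m⁻¹) * m ≤ d * m := mle_right m hnn.le
      have step2 : d * m⁻¹ * d ≤ d * m := by
        calc d * m⁻¹ * d = (d * m⁻¹) * (d * m⁻¹) * m := by group
          _ ≤ d * m := step1
      have step3 : (m * d⁻¹) * (d * m⁻¹ * d) ≤ (m * d⁻¹) * (d * m) := mle_left _ step2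
      calc d = (m * d⁻¹) * (d * m⁻¹ * d) := by group
        _ ≤ (m * d⁻¹) * (d * m) := step3
        _ = m * m := by group
    have hm2 : (1:G) < m * m := by
      have : m * 1 < m * m := mul_lt_mul_right hm m
      exact hm.trans (by simpa using this)
    have hc_d : c ∈ Cent (· * ·) d := hs2 c hc d hdC
    obtain ⟨f₀, hf₀, hcf₀⟩ := h1 (m*m) d hm2 hd_pos hdm2 c hc_d
    have hf₀m : f₀ ∈ Cent (· * ·) m := cent_of_sq hf₀
    refine Or.inr ⟨hm.ne', f₀⁻¹, inv_mem_cent hf₀m, f₀, hf₀m, ?_, hcf₀⟩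
    have : f₀⁻¹ ≤ 1 := inv_le_one_of (hcpos.le.trans hcf₀)
    exact this.trans hcpos.le

/-- Key lemma: if `m ≍ s` with `s` scaling, then every nontrivial element
of `Cent s` satisfies `c ≼ m`. -/
lemma crux (h1 : GOG1 (· * ·) (1 : G) (· < ·) (· ≤ ·)) {s : G}
    (hsc : Scaling (· * ·) (1:G) (·⁻¹) (· < ·) (· ≤ ·) s)
    {m c : G} (hms : Asymp (· * ·) (1:G) (· ≤ ·) m s)
    (hc : c ∈ Cent (· * ·) s) (hc1 : c ≠ 1) :
    Preceq (· * ·) (1:G) (· ≤ ·) c m := by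
  have hm1 : m ≠ 1 := by
    intro h
    subst h
    have := preceq_one_elim hms.2
    exact absurd this (ne_of_gt hsc.1)
  -- normalize signs
  rcases lt_trichotomy 1 m with hm | hm | hm
  · rcases lt_trichotomy 1 c with hcp | hcp | hcp
    · exact crux_core h1 hsc hms hc hm hcp
    · exact absurd hcp.symm hc1
    · have h := crux_core h1 hsc hms (inv_mem_cent hc) hm (one_lt_inv_of hcp)
      simpa using preceq_inv_left h
  · exact absurd hm.symm hm1
  · have hms' : Asymp (· * ·) (1:G) (· ≤ ·) m⁻¹ s := asymp_inv_left hms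
    have hminv : 1 < m⁻¹ := one_lt_inv_of hm
    rcases lt_trichotomy 1 c with hcp | hcp | hcp
    · have h := crux_core h1 hsc hms' hc hminv hcp
      simpa using preceq_inv_right h
    · exact absurd hcp.symm hc1
    · have h := crux_core h1 hsc hms' (inv_mem_cent hc) hminv (one_lt_inv_of hcp)
      have h' := preceq_inv_left (preceq_inv_right h)
      simpa using h'

/-! ### Quotient machinery -/

section Quotient

variable (N : Subgroup G) [N.Normal]

/-- The quotient strict order. -/
abbrev qlt (a b : G ⧸ N) : Prop :=
  a ≠ b ∧ ∃ g h : G, (QuotientGroup.mk g : G ⧸ N) = a ∧ (QuotientGroup.mk h : G ⧸ N) = b ∧ g < h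

/-- The quotient order. -/
abbrev qle (a b : G ⧸ N) : Prop := qlt N a b ∨ a = b

variable {N}

lemma convex_one (hinit : ∀ f ∈ N, ∀ g : G, Preceq (· * ·) (1 : G) (· ≤ ·) g f → g ∈ N)
    {t n : G} (hn : n ∈ N) (h1 : (1:G) ≤ t) (h2 : t ≤ n) : t ∈ N := by
  by_cases hn1 : n = 1
  · subst hn1
    have : t = 1 := le_antisymm h2 h1
    rw [this]; exact N.one_mem
  · exact hinit n hn t (Or.inr ⟨hn1, 1, one_mem_cent _, n, self_mem_cent _, h1, h2⟩)

lemma convex (hinit : ∀ f ∈ N, ∀ g : G, Preceq (· * ·) (1 : G) (· ≤ ·) g f → g ∈ N)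
    {a t b : G} (ha : a ∈ N) (hb : b ∈ N) (h1 : a ≤ t) (h2 : t ≤ b) : t ∈ N := by
  have k1 : (1:G) ≤ a⁻¹ * t := by
    have := mle_left a⁻¹ h1; simpa using this
  have k2 : a⁻¹ * t ≤ a⁻¹ * b := mle_left a⁻¹ h2
  have := convex_one hinit (N.mul_mem (N.inv_mem ha) hb) k1 k2
  have h := N.mul_mem ha this
  simpa using h

lemma qlt_iff (hinit : ∀ f ∈ N, ∀ g : G, Preceq (· * ·) (1 : G) (· ≤ ·) g f → g ∈ N)
    {x y : G} :
    qlt N (QuotientGroup.mk x) (QuotientGroup.mk y) ↔ (x⁻¹ * y ∉ N ∧ x < y) := by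
  constructor
  · rintro ⟨hne, g, h, hg, hh, glt⟩
    have hmemne : x⁻¹ * y ∉ N := fun hmem => hne (QuotientGroup.eq.mpr hmem)
    refine ⟨hmemne, ?_⟩
    have hgx : g⁻¹ * x ∈ N := QuotientGroup.eq.mp hg
    have hhy : h⁻¹ * y ∈ N := QuotientGroup.eq.mp hh
    have hgh : g⁻¹ * h ∉ N := by
      intro hmem
      exact hne (by rw [← hg, ← hh]; exact QuotientGroup.eq.mpr hmem)
    by_contra hxy
    push_neg at hxy  -- y ≤ x
    -- g⁻¹ h ≤ (g⁻¹ x)(h⁻¹ y)⁻¹ ∈ N and 1 < g⁻¹ h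
    have k1 : (1:G) < g⁻¹ * h := by
      have := mul_lt_mul_right glt g⁻¹; simpa using this
    have k2 : g⁻¹ * h ≤ (g⁻¹ * x) * (h⁻¹ * y)⁻¹ := by
      have base : h * (h⁻¹ * y) ≤ g * (g⁻¹ * x) := by
        have : (y:G) ≤ x := hxy
        calc h * (h⁻¹ * y) = y := by group
          _ ≤ x := this
          _ = g * (g⁻¹ * x) := by group
      have step := mle_left g⁻¹ (mle_right (h⁻¹ * y)⁻¹ base)
      calc g⁻¹ * h = g⁻¹ * (h * (h⁻¹ * y) * (h⁻¹ * y)⁻¹) := by group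
        _ ≤ g⁻¹ * (g * (g⁻¹ * x) * (h⁻¹ * y)⁻¹) := step
        _ = (g⁻¹ * x) * (h⁻¹ * y)⁻¹ := by group
    have : g⁻¹ * h ∈ N :=
      convex_one hinit (N.mul_mem hgx (N.inv_mem hhy)) k1.le k2
    exact hgh this
  · rintro ⟨hmem, hlt⟩
    exact ⟨fun he => hmem (QuotientGroup.eq.mp he), x, y, rfl, rfl, hlt⟩

lemma qle_iff (hinit : ∀ f ∈ N, ∀ g : G, Preceq (· * ·) (1 : G) (· ≤ ·) g f → g ∈ N)
    {x y : G} :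
    qle N (QuotientGroup.mk x) (QuotientGroup.mk y) ↔ (x⁻¹ * y ∈ N ∨ x < y) := by
  constructor
  · rintro (h | h)
    · exact Or.inr ((qlt_iff hinit).mp h).2
    · exact Or.inl (QuotientGroup.eq.mp h)
  · rintro (h | h)
    · exact Or.inr (QuotientGroup.eq.mpr h)
    · by_cases hmem : x⁻¹ * y ∈ N
      · exact Or.inr (QuotientGroup.eq.mpr hmem)
      · exact Or.inl ((qlt_iff hinit).mpr ⟨hmem, h⟩)

lemma commQ_of_comm {x y : G} (h : x * y = y * x) :
    (QuotientGroup.mk x : G ⧸ N) * QuotientGroup.mk y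
      = QuotientGroup.mk y * QuotientGroup.mk x := by
  show (QuotientGroup.mk (x * y) : G ⧸ N) = QuotientGroup.mk (y * x)
  rw [h]

lemma comm_mem_of_commQ {x y : G}
    (h : (QuotientGroup.mk x : G ⧸ N) * QuotientGroup.mk y
        = QuotientGroup.mk y * QuotientGroup.mk x) :
    x⁻¹ * y⁻¹ * x * y ∈ N := by
  have h' : (QuotientGroup.mk (x * y) : G ⧸ N) = QuotientGroup.mk (y * x) := h
  have hmem : (x * y)⁻¹ * (y * x) ∈ N := QuotientGroup.eq.mp h'
  have := N.inv_mem hmem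
  have he : ((x * y)⁻¹ * (y * x))⁻¹ = x⁻¹ * y⁻¹ * x * y := by group
  rwa [he] at this

lemma asymp_of_commQ
    (hcomm : ∀ f g : G, f ∉ N → g ∉ N → f⁻¹ * g⁻¹ * f * g ∈ N →
      Asymp (· * ·) (1 : G) (· ≤ ·) f g)
    {x y : G} (hx : x ∉ N) (hy : y ∉ N)
    (h : (QuotientGroup.mk x : G ⧸ N) * QuotientGroup.mk y
        = QuotientGroup.mk y * QuotientGroup.mk x) :
    Asymp (· * ·) (1:G) (· ≤ ·) x y :=
  hcomm x y hx hy (comm_mem_of_commQ h)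

lemma preceq_push {x y : G} (hy : y ∉ N)
    (h : Preceq (· * ·) (1:G) (· ≤ ·) x y) :
    Preceq (· * ·) (1 : G ⧸ N) (qle N) (QuotientGroup.mk x) (QuotientGroup.mk y) := by
  rcases h with h | ⟨hy1, a, ha, b, hb, hax, hxb⟩
  · exact Or.inl (by rw [h]; rfl)
  · refine Or.inr ⟨fun he => hy ((QuotientGroup.eq_one_iff y).mp he),
      QuotientGroup.mk a, commQ_of_comm ha, QuotientGroup.mk b, commQ_of_comm hb, ?_, ?_⟩
    · by_cases he : (QuotientGroup.mk a : G ⧸ N) = QuotientGroup.mk x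
      · exact Or.inr he
      · refine Or.inl ⟨he, a, x, rfl, rfl, lt_of_le_of_ne hax ?_⟩
        intro hax'; exact he (by rw [hax'])
    · by_cases he : (QuotientGroup.mk x : G ⧸ N) = QuotientGroup.mk b
      · exact Or.inr he
      · refine Or.inl ⟨he, x, b, rfl, rfl, lt_of_le_of_ne hxb ?_⟩
        intro hxb'; exact he (by rw [hxb'])

end Quotient

section Quotient2

variable {N : Subgroup G} [N.Normal]

lemma mem_of_mk_eq_mem {a x : G} (ha : a ∈ N) (h : a⁻¹ * x ∈ N) : x ∈ N := by
  have : x = a * (a⁻¹ * x) := by group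
  rw [this]; exact N.mul_mem ha h

lemma preceq_pull
    (hinit : ∀ f ∈ N, ∀ g : G, Preceq (· * ·) (1 : G) (· ≤ ·) g f → g ∈ N)
    (hcomm : ∀ f g : G, f ∉ N → g ∉ N → f⁻¹ * g⁻¹ * f * g ∈ N →
      Asymp (· * ·) (1 : G) (· ≤ ·) f g)
    {x y : G} (hx : x ∉ N) (hy : y ∉ N)
    (h : Preceq (· * ·) (1 : G ⧸ N) (qle N) (QuotientGroup.mk x) (QuotientGroup.mk y)) :
    Preceq (· * ·) (1:G) (· ≤ ·) x y := by
  rcases h with h | ⟨hy1, abar, habar, bbar, hbbar, h1, h2⟩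
  · exact absurd ((QuotientGroup.eq_one_iff x).mp h) hx
  by_cases hxyc : (QuotientGroup.mk x : G ⧸ N) * QuotientGroup.mk y
      = QuotientGroup.mk y * QuotientGroup.mk x
  · exact (asymp_of_commQ hcomm hx hy hxyc).1
  obtain ⟨a, rfl⟩ := QuotientGroup.mk_surjective abar
  obtain ⟨b, rfl⟩ := QuotientGroup.mk_surjective bbar
  have hbcomm : (QuotientGroup.mk b : G ⧸ N) * QuotientGroup.mk y
      = QuotientGroup.mk y * QuotientGroup.mk b := hbbar
  have hacomm : (QuotientGroup.mk a : G ⧸ N) * QuotientGroup.mk y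
      = QuotientGroup.mk y * QuotientGroup.mk a := habar
  have hy1' : y ≠ 1 := fun h => hy (h ▸ N.one_mem)
  have hub : ∃ B ∈ Cent (· * ·) y, x ≤ B := by
    by_cases hbN : b ∈ N
    · rcases (qle_iff hinit).mp h2 with hmem | hlt
      · exfalso
        have hx' : x ∈ N := by
          have hbx : b⁻¹ * x ∈ N := by
            have := N.inv_mem hmem
            have he : (x⁻¹ * b)⁻¹ = b⁻¹ * x := by group
            rwa [he] at this
          exact mem_of_mk_eq_mem hbN hbx
        exact hx hx'
      · have hx1 : x ≤ 1 := by
          by_contra hgt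
          push_neg at hgt
          exact hx (convex_one hinit hbN hgt.le hlt.le)
        exact ⟨1, one_mem_cent y, hx1⟩
    · have hAby := asymp_of_commQ hcomm hbN hy hbcomm
      rcases hAby.1 with hb1 | ⟨_, a', _, B, hB, _, hbB⟩
      · exact absurd (hb1 ▸ N.one_mem) hbN
      · rcases (qle_iff hinit).mp h2 with hmem | hlt
        · exfalso
          have heq : (QuotientGroup.mk x : G ⧸ N) = QuotientGroup.mk b :=
            QuotientGroup.eq.mpr hmem
          exact hxyc (by rw [heq]; exact hbcomm)
        · exact ⟨B, hB, hlt.le.trans hbB⟩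
  have hlb : ∃ A ∈ Cent (· * ·) y, A ≤ x := by
    by_cases haN : a ∈ N
    · rcases (qle_iff hinit).mp h1 with hmem | hlt
      · exact absurd (mem_of_mk_eq_mem haN hmem) hx
      · have hx1 : (1:G) ≤ x := by
          by_contra hgt
          push_neg at hgt
          exact hx (convex hinit haN N.one_mem hlt.le hgt.le)
        exact ⟨1, one_mem_cent y, hx1⟩
    · have hAay := asymp_of_commQ hcomm haN hy hacomm
      rcases hAay.1 with ha1 | ⟨_, A, hA, b', _, hAa, _⟩
      · exact absurd (ha1 ▸ N.one_mem) haN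
      · rcases (qle_iff hinit).mp h1 with hmem | hlt
        · exfalso
          have heq : (QuotientGroup.mk a : G ⧸ N) = QuotientGroup.mk x :=
            QuotientGroup.eq.mpr hmem
          exact hxyc (by rw [← heq]; exact hacomm)
        · exact ⟨A, hA, hAa.trans hlt.le⟩
  obtain ⟨B, hB, hxB⟩ := hub
  obtain ⟨A, hA, hAx⟩ := hlb
  exact Or.inr ⟨hy1', A, hA, B, hB, hAx, hxB⟩

/-- Representative lemma: any coset commuting with `mk s` (for `s` scaling, `s ∉ N`)
has a representative in `Cent s`. -/
lemma rep_lemma (h1 : GOG1 (· * ·) (1 : G) (· < ·) (· ≤ ·))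
    (hcomm : ∀ f g : G, f ∉ N → g ∉ N → f⁻¹ * g⁻¹ * f * g ∈ N →
      Asymp (· * ·) (1 : G) (· ≤ ·) f g)
    {s : G} (hsc : Scaling (· * ·) (1:G) (·⁻¹) (· < ·) (· ≤ ·) s) (hsN : s ∉ N)
    {a : G} (haN : a ∉ N)
    (hq : (QuotientGroup.mk a : G ⧸ N) * QuotientGroup.mk s
        = QuotientGroup.mk s * QuotientGroup.mk a) :
    ∃ c : G, c ∈ Cent (· * ·) s ∧ (QuotientGroup.mk c : G ⧸ N) = QuotientGroup.mk a := by
  have hAs : Asymp (· * ·) (1:G) (· ≤ ·) a s := asymp_of_commQ hcomm haN hsN hq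
  obtain ⟨c, hcC, hc1, hsim⟩ := hsc.2.2 a hAs
  by_cases hmN : c * a⁻¹ ∈ N
  · refine ⟨c, hcC, ?_⟩
    rw [QuotientGroup.eq]
    have h' := (Subgroup.Normal.conj_mem ‹N.Normal› _ (N.inv_mem hmN)) a⁻¹
    have he : a⁻¹ * (c * a⁻¹)⁻¹ * (a⁻¹)⁻¹ = c⁻¹ * a := by group
    rwa [he] at h'
  · exfalso
    have hcq : (QuotientGroup.mk c : G ⧸ N) * QuotientGroup.mk s
        = QuotientGroup.mk s * QuotientGroup.mk c := commQ_of_comm hcC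
    have hmq : (QuotientGroup.mk (c * a⁻¹) : G ⧸ N) * QuotientGroup.mk s
        = QuotientGroup.mk s * QuotientGroup.mk (c * a⁻¹) := by
      have hcomm1 : Commute (QuotientGroup.mk c : G ⧸ N) (QuotientGroup.mk s) := hcq
      have hcomm2 : Commute (QuotientGroup.mk a : G ⧸ N) (QuotientGroup.mk s) := hq
      have : Commute ((QuotientGroup.mk c : G ⧸ N) * (QuotientGroup.mk a)⁻¹)
          (QuotientGroup.mk s) := hcomm1.mul_left hcomm2.inv_left
      exact this
    have hAms : Asymp (· * ·) (1:G) (· ≤ ·) (c * a⁻¹) s :=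
      asymp_of_commQ hcomm hmN hsN hmq
    have := crux h1 hsc hAms hcC hc1
    exact hsim.2 this

end Quotient2

section Final

variable {N : Subgroup G} [N.Normal]

lemma qlt_one_iff (hinit : ∀ f ∈ N, ∀ g : G, Preceq (· * ·) (1 : G) (· ≤ ·) g f → g ∈ N)
    {f : G} :
    qlt N 1 (QuotientGroup.mk f) ↔ (f ∉ N ∧ 1 < f) := by
  rw [show (1 : G ⧸ N) = QuotientGroup.mk 1 from (QuotientGroup.mk_one (N := N)).symm,
    qlt_iff hinit]
  simp

lemma gog1Q (hinit : ∀ f ∈ N, ∀ g : G, Preceq (· * ·) (1 : G) (· ≤ ·) g f → g ∈ N)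
    (hcomm : ∀ f g : G, f ∉ N → g ∉ N → f⁻¹ * g⁻¹ * f * g ∈ N →
      Asymp (· * ·) (1 : G) (· ≤ ·) f g)
    (h1G : GOG1 (· * ·) (1 : G) (· < ·) (· ≤ ·)) :
    GOG1 ((· * ·) : G ⧸ N → G ⧸ N → G ⧸ N) (1 : G ⧸ N) (qlt N) (qle N) := by
  intro fbar gbar hf hg hgf g0bar hg0
  obtain ⟨f, rfl⟩ := QuotientGroup.mk_surjective fbar
  obtain ⟨g, rfl⟩ := QuotientGroup.mk_surjective gbar
  obtain ⟨g₀, rfl⟩ := QuotientGroup.mk_surjective g0bar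
  rcases hgf with hlt | heq
  · have hf' := (qlt_one_iff hinit).mp hf
    have hg' := (qlt_one_iff hinit).mp hg
    have hglt := (qlt_iff hinit).mp hlt
    by_cases hg0N : g₀ ∈ N
    · refine ⟨1, ?_, ?_⟩
      · show (1 : G ⧸ N) * QuotientGroup.mk f = QuotientGroup.mk f * 1
        simp
      · exact Or.inr ((QuotientGroup.eq_one_iff g₀).mpr hg0N)
    · have hg0q : (QuotientGroup.mk g₀ : G ⧸ N) * QuotientGroup.mk g
          = QuotientGroup.mk g * QuotientGroup.mk g₀ := hg0
      have hAs := asymp_of_commQ hcomm hg0N hg'.1 hg0q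
      rcases hAs.1 with h01 | ⟨_, a, _, B, hB, _, hg0B⟩
      · exact absurd (h01 ▸ N.one_mem) hg0N
      · obtain ⟨f₀, hf₀, hBf₀⟩ := h1G f g hf'.2 hg'.2 hglt.2.le B hB
        refine ⟨QuotientGroup.mk f₀, commQ_of_comm hf₀, ?_⟩
        have hle : g₀ ≤ f₀ := hg0B.trans hBf₀
        by_cases he : (QuotientGroup.mk g₀ : G ⧸ N) = QuotientGroup.mk f₀
        · exact Or.inr he
        · exact Or.inl ⟨he, g₀, f₀, rfl, rfl,
            lt_of_le_of_ne hle (fun e => he (by rw [e]))⟩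
  · exact ⟨QuotientGroup.mk g₀, heq ▸ hg0, Or.inr rfl⟩

lemma gog2Q (hinit : ∀ f ∈ N, ∀ g : G, Preceq (· * ·) (1 : G) (· ≤ ·) g f → g ∈ N)
    (h2G : GOG2 (· * ·) (1 : G) (· < ·)) :
    GOG2 ((· * ·) : G ⧸ N → G ⧸ N → G ⧸ N) (1 : G ⧸ N) (qlt N) := by
  intro fbar gbar hf hg hcent
  obtain ⟨f, rfl⟩ := QuotientGroup.mk_surjective fbar
  obtain ⟨g, rfl⟩ := QuotientGroup.mk_surjective gbar
  have hf' := (qlt_one_iff hinit).mp hf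
  have hg' := (qlt_one_iff hinit).mp hg
  have hfg : (QuotientGroup.mk f : G ⧸ N) ∉ Cent (· * ·) (QuotientGroup.mk g) :=
    fun h => (hcent _ h).1 rfl
  have hlt : ∀ h ∈ Cent (· * ·) g, h < f := by
    intro h hh
    have := hcent (QuotientGroup.mk h) (commQ_of_comm hh)
    exact ((qlt_iff hinit).mp this).2
  have hGF := h2G f g hf'.2 hg'.2 hlt
  show qlt N (QuotientGroup.mk (g * f)) (QuotientGroup.mk (f * g))
  refine (qlt_iff hinit).mpr ⟨?_, hGF⟩
  intro hmem
  apply hfg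
  have heq : (QuotientGroup.mk (g * f) : G ⧸ N) = QuotientGroup.mk (f * g) :=
    QuotientGroup.eq.mpr hmem
  exact (heq.symm : (QuotientGroup.mk f : G ⧸ N) * QuotientGroup.mk g
      = QuotientGroup.mk g * QuotientGroup.mk f)

lemma gog3Q (hinit : ∀ f ∈ N, ∀ g : G, Preceq (· * ·) (1 : G) (· ≤ ·) g f → g ∈ N)
    (hcomm : ∀ f g : G, f ∉ N → g ∉ N → f⁻¹ * g⁻¹ * f * g ∈ N →
      Asymp (· * ·) (1 : G) (· ≤ ·) f g)
    (h1G : GOG1 (· * ·) (1 : G) (· < ·) (· ≤ ·))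
    (h3G : GOG3 (· * ·) (1 : G) (·⁻¹) (· < ·) (· ≤ ·)) :
    GOG3 ((· * ·) : G ⧸ N → G ⧸ N → G ⧸ N) (1 : G ⧸ N) (·⁻¹) (qlt N) (qle N) := by
  intro gbar hg1
  obtain ⟨g, rfl⟩ := QuotientGroup.mk_surjective gbar
  have hgN : g ∉ N := fun h => hg1 ((QuotientGroup.eq_one_iff g).mpr h)
  have hg1' : g ≠ 1 := fun h => hgN (h ▸ N.one_mem)
  obtain ⟨s, hsc, hsg⟩ := h3G g hg1'
  have hsN : s ∉ N := fun hs => hgN (hinit s hs g hsg.2)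
  refine ⟨QuotientGroup.mk s, ⟨?_, ?_, ?_⟩, preceq_push hgN hsg.1, preceq_push hsN hsg.2⟩
  · exact (qlt_one_iff hinit).mpr ⟨hsN, hsc.1⟩
  · intro abar habar bbar hbbar
    obtain ⟨a, rfl⟩ := QuotientGroup.mk_surjective abar
    obtain ⟨b, rfl⟩ := QuotientGroup.mk_surjective bbar
    by_cases haN : a ∈ N
    · have ha1 : (QuotientGroup.mk a : G ⧸ N) = 1 := (QuotientGroup.eq_one_iff a).mpr haN
      rw [ha1]
      show (1 : G ⧸ N) * QuotientGroup.mk b = QuotientGroup.mk b * 1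
      simp
    · by_cases hbN : b ∈ N
      · have hb1 : (QuotientGroup.mk b : G ⧸ N) = 1 := (QuotientGroup.eq_one_iff b).mpr hbN
        rw [hb1]
        show (QuotientGroup.mk a : G ⧸ N) * 1 = 1 * QuotientGroup.mk a
        simp
      · obtain ⟨ca, hcaC, hcaEq⟩ := rep_lemma h1G hcomm hsc hsN haN habar
        obtain ⟨cb, hcbC, hcbEq⟩ := rep_lemma h1G hcomm hsc hsN hbN hbbar
        rw [← hcaEq, ← hcbEq]
        exact commQ_of_comm (hsc.2.1 ca hcaC cb hcbC)
  · intro fbar hAf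
    obtain ⟨f, rfl⟩ := QuotientGroup.mk_surjective fbar
    have hfN : f ∉ N := by
      intro hf
      have hf1 : (QuotientGroup.mk f : G ⧸ N) = 1 := (QuotientGroup.eq_one_iff f).mpr hf
      rw [hf1] at hAf
      rcases hAf.2 with h | ⟨hne, _⟩
      · exact hsN ((QuotientGroup.eq_one_iff s).mp h)
      · exact hne rfl
    have hAfs : Asymp (· * ·) (1:G) (· ≤ ·) f s :=
      ⟨preceq_pull hinit hcomm hfN hsN hAf.1, preceq_pull hinit hcomm hsN hfN hAf.2⟩
    obtain ⟨c, hcC, hc1, hsim⟩ := hsc.2.2 f hAfs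
    have hcN : c ∉ N := by
      intro hc
      have hAcs := asymp_of_cent hcC hc1 (fun h => hsN (h ▸ N.one_mem))
      exact hsN (hinit c hc s hAcs.2)
    refine ⟨QuotientGroup.mk c, commQ_of_comm hcC,
      fun h => hcN ((QuotientGroup.eq_one_iff c).mp h), ?_, ?_⟩
    · -- Preceq (mk c * (mk f)⁻¹) (mk c)
      show Preceq (· * ·) (1 : G ⧸ N) (qle N)
        (QuotientGroup.mk (c * f⁻¹)) (QuotientGroup.mk c)
      by_cases hmN : c * f⁻¹ ∈ N
      · exact Or.inl ((QuotientGroup.eq_one_iff _).mpr hmN)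
      · exact preceq_push hcN hsim.1
    · intro hP
      have hP' : Preceq (· * ·) (1 : G ⧸ N) (qle N)
          (QuotientGroup.mk c) (QuotientGroup.mk (c * f⁻¹)) := hP
      by_cases hmN : c * f⁻¹ ∈ N
      · have h1' : (QuotientGroup.mk (c * f⁻¹) : G ⧸ N) = 1 :=
          (QuotientGroup.eq_one_iff _).mpr hmN
        rw [h1'] at hP'
        rcases hP' with h | ⟨hne, _⟩
        · exact hcN ((QuotientGroup.eq_one_iff c).mp h)
        · exact hne rfl
      · exact hsim.2 (preceq_pull hinit hcomm hcN hmN hP')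

lemma orderedQ (hinit : ∀ f ∈ N, ∀ g : G, Preceq (· * ·) (1 : G) (· ≤ ·) g f → g ∈ N) :
    GOG.IsOrderedGroup ((· * ·) : G ⧸ N → G ⧸ N → G ⧸ N) (1 : G ⧸ N)
      ((·⁻¹) : G ⧸ N → G ⧸ N) (qlt N) := by
  refine ⟨fun a b c => mul_assoc a b c, fun a => one_mul a, fun a => mul_one a,
    fun a => inv_mul_cancel a, fun a h => h.1 rfl, ?_, ?_, ?_⟩
  · -- transitivity
    intro a b c hab hbc
    obtain ⟨x, rfl⟩ := QuotientGroup.mk_surjective a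
    obtain ⟨y, rfl⟩ := QuotientGroup.mk_surjective b
    obtain ⟨z, rfl⟩ := QuotientGroup.mk_surjective c
    have h1 := (qlt_iff hinit).mp hab
    have h2 := (qlt_iff hinit).mp hbc
    refine (qlt_iff hinit).mpr ⟨?_, h1.2.trans h2.2⟩
    intro hmem
    have heq : (QuotientGroup.mk x : G ⧸ N) = QuotientGroup.mk z :=
      QuotientGroup.eq.mpr hmem
    have hbc' : qlt N (QuotientGroup.mk y) (QuotientGroup.mk x) := heq ▸ hbc
    have h3 := (qlt_iff hinit).mp hbc'
    exact absurd (h1.2.trans h3.2) (lt_irrefl x)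
  · -- totality
    intro a b
    obtain ⟨x, rfl⟩ := QuotientGroup.mk_surjective a
    obtain ⟨y, rfl⟩ := QuotientGroup.mk_surjective b
    by_cases he : (QuotientGroup.mk x : G ⧸ N) = QuotientGroup.mk y
    · exact Or.inr (Or.inl he)
    · rcases lt_trichotomy x y with h | h | h
      · exact Or.inl ⟨he, x, y, rfl, rfl, h⟩
      · exact absurd (by rw [h]) he
      · exact Or.inr (Or.inr ⟨Ne.symm he, y, x, rfl, rfl, h⟩)
  · -- covariance
    intro fb gb hb hlt
    obtain ⟨F, rfl⟩ := QuotientGroup.mk_surjective fb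
    obtain ⟨Gg, rfl⟩ := QuotientGroup.mk_surjective gb
    obtain ⟨H, rfl⟩ := QuotientGroup.mk_surjective hb
    have h := (qlt_iff hinit).mp hlt
    constructor
    · show qlt N (QuotientGroup.mk (F * Gg)) (QuotientGroup.mk (F * H))
      refine (qlt_iff hinit).mpr ⟨?_, mul_lt_mul_right h.2 F⟩
      intro hmem
      apply h.1
      have he : (F * Gg)⁻¹ * (F * H) = Gg⁻¹ * H := by group
      rwa [he] at hmem
    · show qlt N (QuotientGroup.mk (Gg * F)) (QuotientGroup.mk (H * F))
      refine (qlt_iff hinit).mpr ⟨?_, mul_lt_mul_left h.2 F⟩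
      intro hmem
      apply h.1
      have he : (Gg * F)⁻¹ * (H * F) = F⁻¹ * (Gg⁻¹ * H) * F := by group
      rw [he] at hmem
      have hconj := Subgroup.Normal.conj_mem ‹N.Normal› _ hmem F
      have he2 : F * (F⁻¹ * (Gg⁻¹ * H) * F) * F⁻¹ = Gg⁻¹ * H := by group
      rwa [he2] at hconj

end Final
end StmtAux

theorem stmt_18 {G : Type*} [Group G] [LinearOrder G]
    [CovariantClass G G (· * ·) (· < ·)]
    [CovariantClass G G (Function.swap (· * ·)) (· < ·)]
    (h1 : GOG.GOG1 (· * ·) (1 : G) (· < ·) (· ≤ ·))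
    (h2 : GOG.GOG2 (· * ·) (1 : G) (· < ·))
    (h3 : GOG.GOG3 (· * ·) (1 : G) (·⁻¹) (· < ·) (· ≤ ·))
    (N : Subgroup G) [N.Normal]
    (hinit : ∀ f ∈ N, ∀ g : G, GOG.Preceq (· * ·) (1 : G) (· ≤ ·) g f → g ∈ N)
    (hcomm : ∀ f g : G, f ∉ N → g ∉ N → f⁻¹ * g⁻¹ * f * g ∈ N →
      GOG.Asymp (· * ·) (1 : G) (· ≤ ·) f g) :
    GOG.IsGrowthOrderGroup
      ((· * ·) : G ⧸ N → G ⧸ N → G ⧸ N) (1 : G ⧸ N) ((·⁻¹) : G ⧸ N → G ⧸ N)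
      (fun a b : G ⧸ N => a ≠ b ∧ ∃ g h : G,
        (QuotientGroup.mk g : G ⧸ N) = a ∧ (QuotientGroup.mk h : G ⧸ N) = b ∧ g < h)
      (fun a b : G ⧸ N => (a ≠ b ∧ ∃ g h : G,
        (QuotientGroup.mk g : G ⧸ N) = a ∧ (QuotientGroup.mk h : G ⧸ N) = b ∧ g < h) ∨ a = b) := by
  exact ⟨StmtAux.orderedQ hinit, StmtAux.gog1Q hinit hcomm h1,
    StmtAux.gog2Q hinit h2, StmtAux.gog3Q hinit hcomm h1 h3⟩
end

section
/- Let K be an H-field with composition (over C = Ker ∂) satisfying axioms HFC1–HFC5. Then for all a ∈ K and b ∈ K^{>C}, the chain rule holds: (a ∘ b)' = (a' ∘ b) · b'. -/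
set_option maxHeartbeats 1000000 in
theorem stmt_19 {K : Type*} [Field K] [LinearOrder K] [IsStrictOrderedRing K]
    (O : Subring K)
    (hOconv : ∀ a b : K, a ∈ O → |b| ≤ |a| → b ∈ O)
    (hOval : ∀ a : K, a ∈ O ∨ a⁻¹ ∈ O)
    (der : K → K)
    (hder_add : ∀ a b : K, der (a + b) = der a + der b)
    (hder_mul : ∀ a b : K, der (a * b) = der a * b + a * der b)
    (x : K) (hx_der : der x = 1) (hx_gtC : ∀ c : K, der c = 0 → c < x)
    -- HF1
    (hf1 : ∀ a ∈ O, ∃ c : K, der c = 0 ∧ (a - c = 0 ∨ (a - c)⁻¹ ∉ O))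
    -- HF2
    (hf2 : ∀ a : K, (∀ c : K, der c = 0 → c < a) → 0 < der a)
    (comp : K → K → K)
    -- HFC1
    (hfc1 : ∀ b : K, (∀ c : K, der c = 0 → c < b) →
      (∀ a a' : K, comp (a + a') b = comp a b + comp a' b) ∧
      (∀ a a' : K, comp (a * a') b = comp a b * comp a' b) ∧
      comp 1 b = 1 ∧
      (∀ c a : K, der c = 0 → comp (c * a) b = c * comp a b) ∧
      (∀ a a' : K, a ≤ a' → comp a b ≤ comp a' b))
    -- HFC2
    (hfc2 : ∀ a b d : K, (∀ c : K, der c = 0 → c < b) → (∀ c : K, der c = 0 → c < d) →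
      comp a (comp b d) = comp (comp a b) d)
    -- HFC3
    (hfc3 : ∀ a : K, (∀ c : K, der c = 0 → c < a) → ∀ b b' : K,
      (∀ c : K, der c = 0 → c < b) → (∀ c : K, der c = 0 → c < b') →
      b < b' → comp a b < comp a b')
    -- HFC4
    (hfc4x : ∀ a : K, comp a x = a)
    (hfc4b : ∀ b : K, (∀ c : K, der c = 0 → c < b) → comp x b = b)
    -- HFC5 (Taylor expansions)
    (hfc5 : ∀ a δ b : K, ∀ n : ℕ, (∀ c : K, der c = 0 → c < b) →
      (∃ ε : K, (ε = 0 ∨ ε⁻¹ ∉ O) ∧ δ = ε * a) →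
      (comp (der a / a) b * δ = 0 ∨ (comp (der a / a) b * δ)⁻¹ ∉ O) →
      ∃ ε : K, (ε = 0 ∨ ε⁻¹ ∉ O) ∧
        comp a (b + δ) - (∑ k ∈ Finset.range (n + 1),
          comp (der^[k] a) b / (Nat.factorial k : K) * δ ^ k)
          = ε * (comp (der^[n] a) b * δ ^ n)) :
    ∀ a b : K, (∀ c : K, der c = 0 → c < b) →
      der (comp a b) = comp (der a) b * der b := by
  intro a b hb
  -- basic facts about der
  have der0 : der 0 = 0 := by have h := hder_add 0 0; simp at h; linarith
  have der1 : der (1:K) = 0 := by have h := hder_mul 1 1; simp at h; linarith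
  -- existence of an element outside O
  obtain ⟨y, hy⟩ : ∃ y : K, y ∉ O := by
    by_contra hall
    push_neg at hall
    obtain ⟨c, hc0, hc⟩ := hf1 x (hall x)
    rcases hc with h | h
    · have hxc : x = c := by linarith [sub_eq_zero.mp h]
      rw [hxc, hc0] at hx_der
      exact one_ne_zero hx_der.symm
    · exact h (hall _)
  have hy0 : y ≠ 0 := fun h => hy (h ▸ O.zero_mem)
  set μ : K := y⁻¹ with hμdef
  have hμ0 : μ ≠ 0 := inv_ne_zero hy0
  have hμinf : μ⁻¹ ∉ O := by rwa [hμdef, inv_inv]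
  have hμpos : 0 < |μ| := abs_pos.mpr hμ0
  have hsmall1 : ∀ ε : K, (ε = 0 ∨ ε⁻¹ ∉ O) → |ε| < 1 := by
    intro ε hε
    rcases hε with rfl | hε
    · simp
    · by_contra hge
      push_neg at hge
      exact hε (hOconv 1 ε⁻¹ O.one_mem (by rw [abs_inv, abs_one]; exact inv_le_one_of_one_le₀ hge))
  have hμ1 : |μ| < 1 := hsmall1 μ (Or.inr hμinf)
  have hsm : ∀ z : K, |z| ≤ |μ| → (z = 0 ∨ z⁻¹ ∉ O) := by
    intro z hz
    rcases eq_or_ne z 0 with rfl | hz0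
    · exact Or.inl rfl
    · refine Or.inr fun hmem => hμinf (hOconv z⁻¹ μ⁻¹ hmem ?_)
      calc |μ⁻¹| = |μ|⁻¹ := abs_inv μ
        _ ≤ |z|⁻¹ := inv_anti₀ (abs_pos.mpr hz0) hz
        _ = |z⁻¹| := (abs_inv z).symm
  -- comp facts for b
  obtain ⟨hadd, hmul, hone, hsmul, hmono⟩ := hfc1 b hb
  have hcomp0 : comp 0 b = 0 := by have h := hadd 0 0; simp at h; linarith
  have hbpos : 0 < b := hb 0 der0
  have hb'pos : 0 < der b := hf2 b hb
  rcases eq_or_ne a 0 with rfl | ha0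
  · rw [hcomp0, der0, hcomp0, zero_mul]
  have hA0 : comp a b ≠ 0 := by
    intro h
    have h1 := hmul a a⁻¹
    rw [mul_inv_cancel₀ ha0, hone, h, zero_mul] at h1
    exact one_ne_zero h1
  by_contra hu
  set A : K := comp a b with hAdef
  set A' : K := der A with hA'def
  set A'' : K := der A' with hA''def
  set a₁ : K := comp (der a) b with ha₁def
  set a₂ : K := comp (der (der a)) b with ha₂def
  set b' : K := der b with hb'def
  set b'' : K := der b' with hb''def
  set g : K := comp (der a / a) b with hgdef
  set u : K := A' - a₁ * b' with hudef
  have hu0 : u ≠ 0 := by rw [hudef]; exact sub_ne_zero.mpr hu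
  set B : K := |b'| + 2 * |b''| + 1 with hBdef
  set M : K := 2 * |A''| + 2 * |a₁| * |b''| + 2 * |a₂| * (|b'| + 2 * |b''|) ^ 2 with hMdef
  have hBpos : 0 < B := by positivity
  have hMnn : 0 ≤ M := by positivity
  set r : K := min 1 (min (|A| / (|A'| + 1)) (min (|b| / (|b'| + 1))
      (min (|a| / B) (min (1 / ((|g| + 1) * B)) (|u| / (M + 1)))))) with hrdef
  have hApos : 0 < |A| := abs_pos.mpr hA0
  have hapos : 0 < |a| := abs_pos.mpr ha0
  have hbabs : 0 < |b| := abs_pos.mpr (ne_of_gt hbpos)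
  have hupos : 0 < |u| := abs_pos.mpr hu0
  have hrpos : 0 < r := by
    refine lt_min one_pos (lt_min (by positivity) (lt_min (by positivity)
      (lt_min (by positivity) (lt_min (by positivity) (by positivity)))))
  have hr1 : r ≤ 1 := min_le_left _ _
  have hr2 : r ≤ |A| / (|A'| + 1) := (min_le_right _ _).trans (min_le_left _ _)
  have hr3 : r ≤ |b| / (|b'| + 1) :=
    (min_le_right _ _).trans ((min_le_right _ _).trans (min_le_left _ _))
  have hr4 : r ≤ |a| / B :=
    (min_le_right _ _).trans ((min_le_right _ _).trans ((min_le_right _ _).trans (min_le_left _ _)))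
  have hr5 : r ≤ 1 / ((|g| + 1) * B) :=
    (min_le_right _ _).trans ((min_le_right _ _).trans ((min_le_right _ _).trans
      ((min_le_right _ _).trans (min_le_left _ _))))
  have hr6 : r ≤ |u| / (M + 1) :=
    (min_le_right _ _).trans ((min_le_right _ _).trans ((min_le_right _ _).trans
      ((min_le_right _ _).trans (min_le_right _ _))))
  set δ : K := μ * r with hδdef
  have hδ0 : δ ≠ 0 := mul_ne_zero hμ0 (ne_of_gt hrpos)
  have hδabs : |δ| = |μ| * r := by rw [hδdef, abs_mul, abs_of_pos hrpos]
  have hδμ : |δ| ≤ |μ| := by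
    rw [hδabs]
    calc |μ| * r ≤ |μ| * 1 := mul_le_mul_of_nonneg_left hr1 (abs_nonneg μ)
      _ = |μ| := mul_one _
  have hδ1 : |δ| < 1 := lt_of_le_of_lt hδμ hμ1
  have hδpos : 0 < |δ| := abs_pos.mpr hδ0
  -- the universal smallness device
  have hδsmall : ∀ z v : K, 0 ≤ v → |z| ≤ |δ| * v → r * v ≤ 1 → (z = 0 ∨ z⁻¹ ∉ O) := by
    intro z v hv hzv hrv
    refine hsm z (hzv.trans ?_)
    rw [hδabs, mul_assoc]
    calc |μ| * (r * v) ≤ |μ| * 1 := mul_le_mul_of_nonneg_left hrv (abs_nonneg μ)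
      _ = |μ| := mul_one _
  -- x + δ is above the constants
  have hxδ : ∀ c : K, der c = 0 → c < x + δ := by
    intro c hc
    have h1 : der (c + 1) = 0 := by rw [hder_add, hc, der1, add_zero]
    have h2 := hx_gtC _ h1
    have h3 : -1 < δ := neg_lt_of_abs_lt hδ1
    linarith
  -- Taylor for A at x
  have hr2' : r * (|A'| + 1) ≤ |A| := by
    rw [le_div_iff₀ (by positivity : (0:K) < |A'| + 1)] at hr2
    exact hr2
  have hcond1A : ∃ ε : K, (ε = 0 ∨ ε⁻¹ ∉ O) ∧ δ = ε * A := by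
    refine ⟨δ / A, hδsmall _ |A|⁻¹ (by positivity) ?_ ?_, (div_mul_cancel₀ δ hA0).symm⟩
    · rw [abs_div, div_eq_mul_inv]
    · have h1 : r ≤ |A| := by nlinarith only [hr2', hrpos, abs_nonneg A']
      calc r * |A|⁻¹ ≤ |A| * |A|⁻¹ := mul_le_mul_of_nonneg_right h1 (by positivity)
        _ = 1 := mul_inv_cancel₀ (ne_of_gt hApos)
  have hcond2A : comp (der A / A) x * δ = 0 ∨ (comp (der A / A) x * δ)⁻¹ ∉ O := by
    rw [hfc4x]
    refine hδsmall _ (|A'| / |A|) (by positivity) ?_ ?_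
    · rw [abs_mul, abs_div, mul_comm]
    · have h3 : r * |A'| ≤ |A| := by linarith only [hr2', hrpos]
      rw [show r * (|A'| / |A|) = r * |A'| / |A| from by ring, div_le_one hApos]
      exact h3
  obtain ⟨εA, hεAs, hεA⟩ := hfc5 A δ x 2 hx_gtC hcond1A hcond2A
  simp only [Finset.sum_range_succ, Finset.sum_range_zero, Function.iterate_succ_apply',
    Function.iterate_zero_apply, hfc4x, Nat.factorial] at hεA
  norm_num at hεA
  -- Taylor for b at x
  have hr3' : r * (|b'| + 1) ≤ |b| := by
    rw [le_div_iff₀ (by positivity : (0:K) < |b'| + 1)] at hr3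
    exact hr3
  have hcond1b : ∃ ε : K, (ε = 0 ∨ ε⁻¹ ∉ O) ∧ δ = ε * b := by
    refine ⟨δ / b, hδsmall _ |b|⁻¹ (by positivity) ?_ ?_, (div_mul_cancel₀ δ (ne_of_gt hbpos)).symm⟩
    · rw [abs_div, div_eq_mul_inv]
    · have h1 : r ≤ |b| := by nlinarith only [hr3', hrpos, abs_nonneg b']
      calc r * |b|⁻¹ ≤ |b| * |b|⁻¹ := mul_le_mul_of_nonneg_right h1 (by positivity)
        _ = 1 := mul_inv_cancel₀ (ne_of_gt hbabs)
  have hcond2b : comp (der b / b) x * δ = 0 ∨ (comp (der b / b) x * δ)⁻¹ ∉ O := by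
    rw [hfc4x]
    refine hδsmall _ (|b'| / |b|) (by positivity) ?_ ?_
    · rw [abs_mul, abs_div, mul_comm]
    · have h3 : r * |b'| ≤ |b| := by linarith only [hr3', hrpos]
      rw [show r * (|b'| / |b|) = r * |b'| / |b| from by ring, div_le_one hbabs]
      exact h3
  obtain ⟨εb, hεbs, hεb⟩ := hfc5 b δ x 2 hx_gtC hcond1b hcond2b
  simp only [Finset.sum_range_succ, Finset.sum_range_zero, Function.iterate_succ_apply',
    Function.iterate_zero_apply, hfc4x, Nat.factorial] at hεb
  norm_num at hεb
  set δ₁ : K := comp b (x + δ) - b with hδ₁def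
  have hδ₁P : δ₁ = (b' + (1/2 + εb) * b'' * δ) * δ := by
    rw [hδ₁def]
    linear_combination hεb
  have hεbabs : |εb| < 1 := hsmall1 _ hεbs
  have hhalfb : |(1/2:K) + εb| ≤ 2 := by
    calc |(1/2:K) + εb| ≤ |(1/2:K)| + |εb| := abs_add_le _ _
      _ ≤ 2 := by rw [abs_of_pos (by norm_num : (0:K) < 1/2)]; linarith
  have hQ : |b' + (1/2 + εb) * b'' * δ| ≤ |b'| + 2 * |b''| := by
    calc |b' + (1/2 + εb) * b'' * δ| ≤ |b'| + |(1/2 + εb) * b'' * δ| := abs_add_le _ _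
      _ ≤ |b'| + 2 * |b''| := by
          have h1 : |(1/2 + εb) * b'' * δ| ≤ 2 * |b''| := by
            rw [abs_mul, abs_mul]
            calc |(1/2:K) + εb| * |b''| * |δ| ≤ 2 * |b''| * 1 :=
                mul_le_mul (mul_le_mul_of_nonneg_right hhalfb (abs_nonneg b'')) hδ1.le
                  (abs_nonneg δ) (by positivity)
              _ = 2 * |b''| := mul_one _
          linarith
  have hQB : |b' + (1/2 + εb) * b'' * δ| ≤ B := by
    refine hQ.trans ?_
    rw [hBdef]
    linarith
  have hδ₁bound : |δ₁| ≤ |δ| * B := by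
    rw [hδ₁P, abs_mul, mul_comm]
    exact mul_le_mul_of_nonneg_left hQB (abs_nonneg δ)
  -- Taylor for a at b with increment δ₁
  have hcond1a : ∃ ε : K, (ε = 0 ∨ ε⁻¹ ∉ O) ∧ δ₁ = ε * a := by
    refine ⟨δ₁ / a, hδsmall _ (B / |a|) (by positivity) ?_ ?_, (div_mul_cancel₀ δ₁ ha0).symm⟩
    · rw [abs_div, show |δ| * (B / |a|) = |δ| * B / |a| from by ring]
      exact (div_le_div_iff_of_pos_right hapos).mpr hδ₁bound
    · have h4 : r * B ≤ |a| := by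
        rw [le_div_iff₀ hBpos] at hr4
        exact hr4
      rw [show r * (B / |a|) = r * B / |a| from by ring, div_le_one hapos]
      exact h4
  have hcond2a : comp (der a / a) b * δ₁ = 0 ∨ (comp (der a / a) b * δ₁)⁻¹ ∉ O := by
    rw [← hgdef]
    refine hδsmall _ (|g| * B) (by positivity) ?_ ?_
    · rw [abs_mul]
      calc |g| * |δ₁| ≤ |g| * (|δ| * B) := mul_le_mul_of_nonneg_left hδ₁bound (abs_nonneg g)
        _ = |δ| * (|g| * B) := by ring
    · have h5 : r * ((|g| + 1) * B) ≤ 1 := by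
        rw [le_div_iff₀ (by positivity : (0:K) < (|g| + 1) * B)] at hr5
        exact hr5
      have h6 : 0 ≤ r * B := by positivity
      linarith only [h5, h6]
  obtain ⟨εa, hεas, hεa⟩ := hfc5 a δ₁ b 2 hb hcond1a hcond2a
  simp only [Finset.sum_range_succ, Finset.sum_range_zero, Function.iterate_succ_apply',
    Function.iterate_zero_apply, Nat.factorial] at hεa
  norm_num at hεa
  rw [← hAdef, ← ha₁def, ← ha₂def] at hεa
  -- associativity
  have hassoc : comp a (b + δ₁) = comp A (x + δ) := by
    have h1 := hfc2 a b (x + δ) hb hxδ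
    rw [← hAdef] at h1
    rw [show b + δ₁ = comp b (x + δ) by rw [hδ₁def]; ring]
    exact h1
  rw [← hA'def, ← hA''def] at hεA
  rw [← hb'def, ← hb''def] at hεb
  -- the key equation
  have KEQ : A' * δ + (1/2 + εA) * A'' * δ^2 = a₁ * δ₁ + (1/2 + εa) * a₂ * δ₁^2 := by
    linear_combination hεa - hεA - hassoc
  set W : K := -((1/2 + εA) * A'') + a₁ * (1/2 + εb) * b''
      + (1/2 + εa) * a₂ * (b' + (1/2 + εb) * b'' * δ)^2 with hWdef
  have huW : u * δ = W * δ^2 := by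
    have h2 : a₁ * δ₁ + (1/2 + εa) * a₂ * δ₁^2
        = a₁ * b' * δ + (a₁ * (1/2 + εb) * b''
          + (1/2 + εa) * a₂ * (b' + (1/2 + εb) * b'' * δ)^2) * δ^2 := by
      rw [hδ₁P]; ring
    rw [hudef, hWdef]
    linear_combination KEQ + h2
  -- bound on W
  have hεAabs : |εA| < 1 := hsmall1 _ hεAs
  have hεaabs : |εa| < 1 := hsmall1 _ hεas
  have hhalfA : |(1/2:K) + εA| ≤ 2 := by
    calc |(1/2:K) + εA| ≤ |(1/2:K)| + |εA| := abs_add_le _ _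
      _ ≤ 2 := by rw [abs_of_pos (by norm_num : (0:K) < 1/2)]; linarith
  have hhalfa : |(1/2:K) + εa| ≤ 2 := by
    calc |(1/2:K) + εa| ≤ |(1/2:K)| + |εa| := abs_add_le _ _
      _ ≤ 2 := by rw [abs_of_pos (by norm_num : (0:K) < 1/2)]; linarith
  have ht1 : |(1/2 + εA) * A''| ≤ 2 * |A''| := by
    rw [abs_mul]
    exact mul_le_mul_of_nonneg_right hhalfA (abs_nonneg A'')
  have ht2 : |a₁ * (1/2 + εb) * b''| ≤ 2 * |a₁| * |b''| := by
    rw [abs_mul, abs_mul]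
    have h1 : |a₁| * |(1/2:K) + εb| ≤ 2 * |a₁| := by
      calc |a₁| * |(1/2:K) + εb| ≤ |a₁| * 2 := mul_le_mul_of_nonneg_left hhalfb (abs_nonneg a₁)
        _ = 2 * |a₁| := mul_comm _ _
    exact mul_le_mul_of_nonneg_right h1 (abs_nonneg b'')
  have ht3 : |(1/2 + εa) * a₂ * (b' + (1/2 + εb) * b'' * δ)^2|
      ≤ 2 * |a₂| * (|b'| + 2 * |b''|) ^ 2 := by
    rw [abs_mul, abs_mul, abs_pow]
    have hQsq : |b' + (1/2 + εb) * b'' * δ| ^ 2 ≤ (|b'| + 2 * |b''|) ^ 2 :=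
      pow_le_pow_left₀ (abs_nonneg _) hQ 2
    exact mul_le_mul (mul_le_mul_of_nonneg_right hhalfa (abs_nonneg a₂)) hQsq
      (by positivity) (by positivity)
  have hWbound : |W| ≤ M := by
    rw [hWdef, hMdef]
    calc |-((1/2 + εA) * A'') + a₁ * (1/2 + εb) * b''
        + (1/2 + εa) * a₂ * (b' + (1/2 + εb) * b'' * δ)^2|
        ≤ |-((1/2 + εA) * A'') + a₁ * (1/2 + εb) * b''|
          + |(1/2 + εa) * a₂ * (b' + (1/2 + εb) * b'' * δ)^2| := abs_add_le _ _
      _ ≤ |(1/2 + εA) * A''| + |a₁ * (1/2 + εb) * b''|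
          + |(1/2 + εa) * a₂ * (b' + (1/2 + εb) * b'' * δ)^2| := by
          have h1 := abs_add_le (-((1/2 + εA) * A'')) (a₁ * (1/2 + εb) * b'')
          rw [abs_neg] at h1
          linarith
      _ ≤ 2 * |A''| + 2 * |a₁| * |b''| + 2 * |a₂| * (|b'| + 2 * |b''|) ^ 2 := by
          linarith only [ht1, ht2, ht3]
  -- final contradiction
  have hfin : |u| ≤ M * |δ| := by
    have h1 : |u| * |δ| = |W| * |δ|^2 := by
      rw [← abs_mul, huW, abs_mul, abs_pow]
    have h2 : |W| * |δ|^2 ≤ M * |δ|^2 := mul_le_mul_of_nonneg_right hWbound (sq_nonneg _)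
    have h3 : |u| * |δ| ≤ M * |δ| * |δ| := by
      rw [h1]
      calc |W| * |δ|^2 ≤ M * |δ|^2 := h2
        _ = M * |δ| * |δ| := by ring
    exact le_of_mul_le_mul_right h3 hδpos
  have h7 : r * (M + 1) ≤ |u| := by
    rw [le_div_iff₀ (by positivity : (0:K) < M + 1)] at hr6
    exact hr6
  have : |u| < |u| := by
    calc |u| ≤ M * |δ| := hfin
      _ = M * (|μ| * r) := by rw [hδabs]
      _ ≤ (M + 1) * (|μ| * r) := by
          refine mul_le_mul_of_nonneg_right (by linarith) ?_
          positivity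
      _ = |μ| * (r * (M + 1)) := by ring
      _ ≤ |μ| * |u| := mul_le_mul_of_nonneg_left h7 (abs_nonneg μ)
      _ < 1 * |u| := mul_lt_mul_of_pos_right hμ1 hupos
      _ = |u| := one_mul _
  exact absurd this (lt_irrefl _)
end
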